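/- arXiv:2211.13467 — 4 statements merged into one kernel-verified Lean document; each statement's English description precedes it below -/
import Mathlib

section
/- Under the stochastic sampling design, monomial notation and kernel conditions, assume h_j → 0 for each j, n·h_1⋯h_d → ∞, and g continuous at 0. Then every entry of the random D×D matrix S_n(0) := (n h_1⋯h_d)^{−1}·Σ_{i=1}^n K_{Ah}(X_i)·H^{−1}(X_i/A_n)̌·((X_i/A_n)̌)'H^{−1} converges in probability, as n → ∞, to the corresponding entry of g(0)·S, where S := ∫_{ℝ^d} ž ž' K(z)dz. -/
set_option autoImplicit false

open MeasureTheory ProbabilityTheory Filter Topology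

noncomputable section

/-- Multi-indices of total degree at most `p`, encoded as exponent vectors. -/
def Idx (d p : ℕ) := {ν : Fin d → Fin (p + 1) // ∑ j, (ν j : ℕ) ≤ p}

instance (d p : ℕ) : Fintype (Idx d p) := Subtype.fintype _
instance (d p : ℕ) : DecidableEq (Idx d p) := Subtype.instDecidableEq

/-- Monomial `x^ν`. -/
def mono {d : ℕ} (x : Fin d → ℝ) (ν : Fin d → ℕ) : ℝ := ∏ j, x j ^ ν j

/-- `x/A_n`, componentwise rescaling. -/
def scaled {d : ℕ} (A x : Fin d → ℝ) : Fin d → ℝ := fun j => x j / A j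

/-- `K_{Ah}(x) = K(x₁/(A₁h₁),…,x_d/(A_dh_d))`. -/
def KAh {d : ℕ} (K : (Fin d → ℝ) → ℝ) (A h x : Fin d → ℝ) : ℝ :=
  K fun j => x j / (A j * h j)

/-- The cube `R₀ = [−1/2,1/2]^d`. -/
def R0 (d : ℕ) : Set (Fin d → ℝ) :=
  Set.Icc (fun _ => -(1/2 : ℝ)) (fun _ => (1/2 : ℝ))

/-- The kernel moment matrix `S = ∫ ž ž' K(z) dz`. -/
def Smat (d p : ℕ) (K : (Fin d → ℝ) → ℝ) : Matrix (Idx d p) (Idx d p) ℝ :=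
  fun ν μ => ∫ z : Fin d → ℝ,
    mono z (fun j => (ν.1 j : ℕ)) * mono z (fun j => (μ.1 j : ℕ)) * K z

lemma aux_comp_diag {d : ℕ} (c : Fin d → ℝ) (hc : ∀ j, 0 < c j)
    (ψ : (Fin d → ℝ) → ℝ) (hψ : Measurable ψ) :
    ∫ x, ψ x = (∏ j, c j) * ∫ z : Fin d → ℝ, ψ (fun j => c j * z j) := by
  classical
  set f : (Fin d → ℝ) →ₗ[ℝ] (Fin d → ℝ) := Matrix.toLin' (Matrix.diagonal c) with hf
  have hdet : LinearMap.det f = ∏ j, c j := by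
    rw [hf, ← LinearMap.det_toMatrix', LinearMap.toMatrix'_toLin', Matrix.det_diagonal]
  have hprod : (0:ℝ) < ∏ j, c j := Finset.prod_pos fun j _ => hc j
  have hdne : LinearMap.det f ≠ 0 := by rw [hdet]; exact ne_of_gt hprod
  have happ : ∀ z, f z = fun j => c j * z j := by
    intro z; funext j
    simp [hf, Matrix.toLin'_apply, Matrix.mulVec_diagonal]
  have hmap : Measure.map f volume = ENNReal.ofReal |(LinearMap.det f)⁻¹| • volume :=
    Real.map_linearMap_volume_pi_eq_smul_volume_pi hdne
  have hfm : Measurable f := f.continuous_of_finiteDimensional.measurable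
  have h1 : ∫ z, ψ (f z) = ∫ x, ψ x ∂(Measure.map f volume) :=
    (integral_map hfm.aemeasurable hψ.aestronglyMeasurable).symm
  have h2 : ∫ x, ψ x ∂(Measure.map f volume) = (∏ j, c j)⁻¹ * ∫ x, ψ x := by
    rw [hmap, integral_smul_measure, hdet, ENNReal.toReal_ofReal (abs_nonneg _),
      abs_inv, abs_of_pos hprod, smul_eq_mul]
  have h3 : (fun z => ψ (f z)) = fun z => ψ (fun j => c j * z j) := by
    funext z; rw [happ]
  rw [← h3, h1, h2]
  field_simp

lemma key {Ω : Type*} [MeasurableSpace Ω] (P : Measure Ω) [IsProbabilityMeasure P]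
    (d : ℕ)
    (A h : ℕ → Fin d → ℝ)
    (hApos : ∀ n j, 0 < A n j) (hhpos : ∀ n j, 0 < h n j)
    (hh0 : ∀ j, Tendsto (fun n => h n j) atTop (𝓝 0))
    (hnh : Tendsto (fun n : ℕ => (n : ℝ) * ∏ j, h n j) atTop atTop)
    (X : ℕ → ℕ → Ω → (Fin d → ℝ))
    (hXmeas : ∀ n i, Measurable (X n i))
    (g : (Fin d → ℝ) → ℝ)
    (hgmeas : Measurable g) (Cg : ℝ) (hgbd : ∀ x, |g x| ≤ Cg)
    (hgnonneg : ∀ x, 0 ≤ g x)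
    (hgcont : ContinuousAt g 0)
    (hXdens : ∀ n i, i < n → Measure.map (X n i) P =
      volume.withDensity (fun x =>
        ENNReal.ofReal ((∏ j, A n j)⁻¹ * g (scaled (A n) x))))
    (hXindep : ∀ n, iIndepFun (fun i : Fin n => X n i) P)
    (F : (Fin d → ℝ) → ℝ) (hFmeas : Measurable F)
    (CF : ℝ) (hFbd : ∀ z, |F z| ≤ CF) (hFsupp : ∀ z, z ∉ R0 d → F z = 0)
    (δ : ℝ) (hδ : 0 < δ) :
    Tendsto (fun n : ℕ =>
        (P {ω | δ < |(1 / ((n : ℝ) * ∏ j, h n j)) *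
            (∑ i ∈ Finset.range n, F (fun j => X n i ω j / (A n j * h n j))) -
            g 0 * ∫ z, F z|}).toReal) atTop (𝓝 0) := by
  classical
  have hCF0 : 0 ≤ CF := le_trans (abs_nonneg _) (hFbd 0)
  have hCg0 : 0 ≤ Cg := le_trans (abs_nonneg _) (hgbd 0)
  have hR0m : MeasurableSet (R0 d) := measurableSet_Icc
  have hR0vol : (volume (R0 d)) = 1 := by
    rw [R0, Real.volume_Icc_pi]
    norm_num
  have hπh : ∀ n, (0:ℝ) < ∏ j, h n j := fun n => Finset.prod_pos fun j _ => hhpos n j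
  have hπA : ∀ n, (0:ℝ) < ∏ j, A n j := fun n => Finset.prod_pos fun j _ => hApos n j
  have hsm : ∀ n : ℕ, Measurable fun x : Fin d → ℝ => (fun j => x j / (A n j * h n j)) :=
    fun n => measurable_pi_lambda _ fun j => (measurable_pi_apply j).div_const _
  set Z : ℕ → ℕ → Ω → ℝ := fun n i ω => F (fun j => X n i ω j / (A n j * h n j)) with hZdef
  have hZmeas : ∀ n i, Measurable (Z n i) := fun n i =>
    (hFmeas.comp (hsm n)).comp (hXmeas n i)
  -- the moment identity
  have hmom : ∀ (φ : (Fin d → ℝ) → ℝ), Measurable φ → ∀ n i, i < n →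
      ∫ ω, φ (fun j => X n i ω j / (A n j * h n j)) ∂P
        = (∏ j, h n j) * ∫ z : Fin d → ℝ, g (fun j => h n j * z j) * φ z := by
    intro φ hφ n i hin
    have hc : ∀ j, 0 < A n j * h n j := fun j => mul_pos (hApos n j) (hhpos n j)
    set ρ : (Fin d → ℝ) → ℝ := fun x => (∏ j, A n j)⁻¹ * g (scaled (A n) x) with hρdef
    have hρmeas : Measurable ρ := by
      apply measurable_const.mul
      exact hgmeas.comp (measurable_pi_lambda _ fun j => (measurable_pi_apply j).div_const _)
    have hρnn : ∀ x, 0 ≤ ρ x := fun x => mul_nonneg (inv_nonneg.2 (hπA n).le) (hgnonneg _)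
    have comp_meas : Measurable fun x : Fin d → ℝ => φ (fun j => x j / (A n j * h n j)) :=
      hφ.comp (hsm n)
    have step1 : ∫ ω, φ (fun j => X n i ω j / (A n j * h n j)) ∂P
        = ∫ x, ρ x * φ (fun j => x j / (A n j * h n j)) := by
      rw [← integral_map (hXmeas n i).aemeasurable comp_meas.aestronglyMeasurable,
        hXdens n i hin]
      have hdw : (∫ x, φ (fun j => x j / (A n j * h n j))
            ∂(volume.withDensity fun x =>
              ENNReal.ofReal ((∏ j, A n j)⁻¹ * g (scaled (A n) x))))
          = ∫ x, ((fun y => (ρ y).toNNReal) x) • φ (fun j => x j / (A n j * h n j)) :=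
        integral_withDensity_eq_integral_smul (measurable_real_toNNReal.comp hρmeas) _
      rw [hdw]
      congr 1; funext x
      rw [NNReal.smul_def, smul_eq_mul, Real.coe_toNNReal _ (hρnn x)]
    have step2 : ∫ x, ρ x * φ (fun j => x j / (A n j * h n j))
        = (∏ j, (A n j * h n j)) *
          ∫ z : Fin d → ℝ, ρ (fun j => (A n j * h n j) * z j) *
            φ (fun j => ((A n j * h n j) * z j) / (A n j * h n j)) :=
      aux_comp_diag _ hc _ (hρmeas.mul comp_meas)
    have step3 : ∀ z : Fin d → ℝ,
        ρ (fun j => (A n j * h n j) * z j) *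
          φ (fun j => ((A n j * h n j) * z j) / (A n j * h n j))
        = (∏ j, A n j)⁻¹ * (g (fun j => h n j * z j) * φ z) := by
      intro z
      have e1 : scaled (A n) (fun j => (A n j * h n j) * z j) = fun j => h n j * z j := by
        funext j; dsimp only [scaled]; field_simp [(hApos n j).ne']
      have e2 : (fun j => ((A n j * h n j) * z j) / (A n j * h n j)) = z := by
        funext j; exact mul_div_cancel_left₀ _ (hc j).ne'
      rw [hρdef]; dsimp only; rw [e1, e2, mul_assoc]
    rw [step1, step2]
    simp_rw [step3]
    rw [integral_const_mul, Finset.prod_mul_distrib, ← mul_assoc]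
    congr 1
    rw [mul_comm (∏ j, A n j) (∏ j, h n j), mul_assoc, mul_inv_cancel₀ (hπA n).ne', mul_one]
  set I : ℕ → ℝ := fun n => ∫ z : Fin d → ℝ, g (fun j => h n j * z j) * F z with hIdef
  set L : ℝ := g 0 * ∫ z, F z with hLdef
  -- limit of expectations
  have hIlim : Tendsto I atTop (𝓝 L) := by
    have hbint : Integrable (Set.indicator (R0 d) (fun _ => Cg * CF)) volume := by
      rw [integrable_indicator_iff hR0m]
      exact integrableOn_const (by rw [hR0vol]; exact ENNReal.one_ne_top)
    have hmes : ∀ n : ℕ, AEStronglyMeasurable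
        (fun z : Fin d → ℝ => g (fun j => h n j * z j) * F z) volume := by
      intro n
      exact ((hgmeas.comp (measurable_pi_lambda _
        fun j => (measurable_pi_apply j).const_mul _)).mul hFmeas).aestronglyMeasurable
    have hbd : ∀ n : ℕ, ∀ᵐ z : Fin d → ℝ,
        ‖g (fun j => h n j * z j) * F z‖ ≤ Set.indicator (R0 d) (fun _ => Cg * CF) z := by
      intro n
      refine Eventually.of_forall fun z => ?_
      by_cases hz : z ∈ R0 d
      · rw [Set.indicator_of_mem hz, Real.norm_eq_abs, abs_mul]
        exact mul_le_mul (hgbd _) (hFbd z) (abs_nonneg _) hCg0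
      · rw [Set.indicator_of_notMem hz, hFsupp z hz]; simp
    have hlim : ∀ᵐ z : Fin d → ℝ, Tendsto
        (fun n : ℕ => g (fun j => h n j * z j) * F z) atTop (𝓝 (g 0 * F z)) := by
      refine Eventually.of_forall fun z => ?_
      refine Tendsto.mul_const _ ?_
      refine hgcont.tendsto.comp ?_
      rw [tendsto_pi_nhds]
      intro j
      simpa using (hh0 j).mul_const (z j)
    have := tendsto_integral_of_dominated_convergence _ hmes hbint hbd hlim
    rw [hLdef, ← integral_const_mul]
    exact this
  -- the statistic
  set T : ℕ → Ω → ℝ := fun n ω => (1 / ((n : ℝ) * ∏ j, h n j)) *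
    ∑ i ∈ Finset.range n, Z n i ω with hTdef
  have hZmem : ∀ n i, MemLp (Z n i) 2 P := fun n i =>
    memLp_of_bounded (Eventually.of_forall fun ω => abs_le.1 (hFbd _))
      (hZmeas n i).aestronglyMeasurable 2
  have hSmem : ∀ n, MemLp (fun ω => ∑ i ∈ Finset.range n, Z n i ω) 2 P := by
    intro n
    have h1 := memLp_finset_sum' (μ := P) (Finset.range n) (f := fun i => Z n i)
      (fun i _ => hZmem n i)
    have heq : (∑ i ∈ Finset.range n, Z n i) = fun ω => ∑ i ∈ Finset.range n, Z n i ω := by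
      funext ω; simp
    rwa [heq] at h1
  have hTmem : ∀ n, MemLp (T n) 2 P := fun n => (hSmem n).const_mul _
  have hET : ∀ n, 1 ≤ n → ∫ ω, T n ω ∂P = I n := by
    intro n hn
    have hnne : ((n:ℝ)) ≠ 0 := Nat.cast_ne_zero.2 (by omega)
    have hint : ∫ ω, (∑ i ∈ Finset.range n, Z n i ω) ∂P
        = ∑ i ∈ Finset.range n, ∫ ω, Z n i ω ∂P :=
      integral_finset_sum _ fun i _ => ((hZmem n i).integrable one_le_two)
    have hTn : (fun ω => T n ω) = fun ω => (1 / ((n : ℝ) * ∏ j, h n j)) *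
        ∑ i ∈ Finset.range n, Z n i ω := rfl
    rw [hTn]
    rw [integral_const_mul, hint]
    have heach : ∀ i ∈ Finset.range n, ∫ ω, Z n i ω ∂P = (∏ j, h n j) * I n := by
      intro i hi
      exact hmom F hFmeas n i (Finset.mem_range.1 hi)
    rw [Finset.sum_congr rfl heach, Finset.sum_const, Finset.card_range, nsmul_eq_mul]
    field_simp [hnne, (hπh n).ne']
  have hVarT : ∀ n, 1 ≤ n →
      variance (T n) P ≤ (Cg * CF^2) / ((n:ℝ) * ∏ j, h n j) := by
    intro n hn
    have hnne : ((n:ℝ)) ≠ 0 := Nat.cast_ne_zero.2 (by omega)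
    have hpair : Set.Pairwise ↑(Finset.range n) (fun i j => IndepFun (Z n i) (Z n j) P) := by
      intro i hi j hj hij
      have hi' : i < n := Finset.mem_range.1 (Finset.mem_coe.1 hi)
      have hj' : j < n := Finset.mem_range.1 (Finset.mem_coe.1 hj)
      have hcomp := (hXindep n).comp
        (fun _ : Fin n => fun x : Fin d → ℝ => F (fun j => x j / (A n j * h n j)))
        (fun _ => hFmeas.comp (hsm n))
      exact hcomp.indepFun (i := ⟨i, hi'⟩) (j := ⟨j, hj'⟩)
        (by simp [Fin.ext_iff]; exact hij)
    have hvs : variance (fun ω => ∑ i ∈ Finset.range n, Z n i ω) P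
        = ∑ i ∈ Finset.range n, variance (Z n i) P := by
      have := IndepFun.variance_sum (μ := P) (fun i (_ : i ∈ Finset.range n) => hZmem n i) hpair
      rw [← this]
      congr 1
      funext ω
      simp [Finset.sum_apply]
    have hvar_le : ∀ i ∈ Finset.range n,
        variance (Z n i) P ≤ (∏ j, h n j) * (Cg * CF^2) := by
      intro i hi
      have h1 : variance (Z n i) P ≤ ∫ ω, (Z n i ω)^2 ∂P := by
        have := variance_le_expectation_sq (μ := P) (hZmeas n i).aestronglyMeasurable
        simpa [Pi.pow_apply] using this
      have h2 : ∫ ω, (Z n i ω)^2 ∂P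
          = (∏ j, h n j) * ∫ z : Fin d → ℝ, g (fun j => h n j * z j) * (F z)^2 :=
        hmom (fun z => (F z)^2) (hFmeas.pow_const 2) n i (Finset.mem_range.1 hi)
      have h3 : ∫ z : Fin d → ℝ, g (fun j => h n j * z j) * (F z)^2 ≤ Cg * CF^2 := by
        have hbint2 : Integrable (Set.indicator (R0 d) (fun _ => Cg * CF^2)) volume := by
          rw [integrable_indicator_iff hR0m]
          exact integrableOn_const (by rw [hR0vol]; exact ENNReal.one_ne_top)
        have hle : ∫ z : Fin d → ℝ, g (fun j => h n j * z j) * (F z)^2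
            ≤ ∫ z : Fin d → ℝ, Set.indicator (R0 d) (fun _ => Cg * CF^2) z := by
          refine integral_mono_of_nonneg
            (Eventually.of_forall fun z => mul_nonneg (hgnonneg _) (sq_nonneg _)) hbint2
            (Eventually.of_forall fun z => ?_)
          dsimp only
          by_cases hz : z ∈ R0 d
          · rw [Set.indicator_of_mem hz]
            have hF2 : (F z)^2 ≤ CF^2 := by
              rw [← sq_abs]
              exact pow_le_pow_left₀ (abs_nonneg _) (hFbd z) 2
            exact mul_le_mul (le_trans (le_abs_self _) (hgbd _)) hF2 (sq_nonneg _) hCg0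
          · rw [Set.indicator_of_notMem hz, hFsupp z hz]
            simp
        rw [integral_indicator_const _ hR0m, measureReal_def, hR0vol] at hle
        simpa using hle
      calc variance (Z n i) P ≤ ∫ ω, (Z n i ω)^2 ∂P := h1
        _ = (∏ j, h n j) * ∫ z : Fin d → ℝ, g (fun j => h n j * z j) * (F z)^2 := h2
        _ ≤ (∏ j, h n j) * (Cg * CF^2) := mul_le_mul_of_nonneg_left h3 (hπh n).le
    have hTsmul : variance (T n) P
        = (1 / ((n:ℝ) * ∏ j, h n j))^2 * variance (fun ω => ∑ i ∈ Finset.range n, Z n i ω) P :=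
      variance_const_mul _ _ _
    have hsum_le : ∑ i ∈ Finset.range n, variance (Z n i) P
        ≤ n * ((∏ j, h n j) * (Cg * CF^2)) := by
      have := Finset.sum_le_card_nsmul (Finset.range n) (fun i => variance (Z n i) P)
        ((∏ j, h n j) * (Cg * CF^2)) hvar_le
      rwa [Finset.card_range, nsmul_eq_mul] at this
    calc variance (T n) P
        = (1 / ((n:ℝ) * ∏ j, h n j))^2 *
          variance (fun ω => ∑ i ∈ Finset.range n, Z n i ω) P := hTsmul
      _ ≤ (1 / ((n:ℝ) * ∏ j, h n j))^2 * (n * ((∏ j, h n j) * (Cg * CF^2))) := by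
          rw [hvs]
          exact mul_le_mul_of_nonneg_left hsum_le (sq_nonneg _)
      _ = (Cg * CF^2) / ((n:ℝ) * ∏ j, h n j) := by
          field_simp [hnne, (hπh n).ne']
  -- assembly
  set b : ℕ → ℝ := fun n => ((Cg * CF^2) / ((n:ℝ) * ∏ j, h n j)) / (δ/2)^2 with hb
  have hblim : Tendsto b atTop (𝓝 0) := by
    have h1 : Tendsto (fun n : ℕ => (Cg * CF^2) / ((n:ℝ) * ∏ j, h n j)) atTop (𝓝 0) :=
      Tendsto.div_atTop tendsto_const_nhds hnh
    simpa using h1.div_const ((δ/2)^2)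
  refine squeeze_zero' (Eventually.of_forall fun n => ENNReal.toReal_nonneg) ?_ hblim
  have hev2 : ∀ᶠ n in atTop, |I n - L| < δ/2 := by
    have := Metric.tendsto_nhds.1 hIlim (δ/2) (by positivity)
    filter_upwards [this] with n hn
    rwa [Real.dist_eq] at hn
  filter_upwards [eventually_ge_atTop 1, hev2] with n hn1 hn2
  show (P {ω | δ < |T n ω - L|}).toReal ≤ b n
  have hsub : {ω | δ < |T n ω - L|} ⊆ {ω | δ/2 ≤ |T n ω - ∫ ω, T n ω ∂P|} := by
    intro ω hω
    simp only [Set.mem_setOf_eq] at hω ⊢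
    rw [hET n hn1]
    have h3 := abs_sub_le (T n ω) (I n) L
    linarith
  have hcheb := meas_ge_le_variance_div_sq (μ := P) (hTmem n) (c := δ/2) (by positivity)
  calc (P {ω | δ < |T n ω - L|}).toReal
      ≤ (P {ω | δ/2 ≤ |T n ω - ∫ ω, T n ω ∂P|}).toReal :=
        ENNReal.toReal_mono (measure_ne_top _ _) (measure_mono hsub)
    _ ≤ (ENNReal.ofReal (variance (T n) P / (δ/2)^2)).toReal :=
        ENNReal.toReal_mono ENNReal.ofReal_ne_top hcheb
    _ = variance (T n) P / (δ/2)^2 :=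
        ENNReal.toReal_ofReal (div_nonneg (variance_nonneg _ _) (by positivity))
    _ ≤ b n := by
        have hle : variance (T n) P / (δ/2)^2
            ≤ ((Cg * CF^2) / ((n:ℝ) * ∏ j, h n j)) / (δ/2)^2 :=
          (div_le_div_iff_of_pos_right (by positivity)).2 (hVarT n hn1)
        exact hle

/-- under the stochastic sampling design, monomial notation and kernel
conditions, with `h_j → 0` and `n h₁⋯h_d → ∞` and `g` continuous at 0, every entry of
`S_n(0) = (n h₁⋯h_d)^{−1} Σᵢ K_{Ah}(Xᵢ) H^{−1}(Xᵢ/A_n)̌ ((Xᵢ/A_n)̌)' H^{−1}`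
converges in probability to the corresponding entry of `g(0)·S`. -/
theorem design_matrix_consistency
    {Ω : Type*} [MeasurableSpace Ω] (P : Measure Ω) [IsProbabilityMeasure P]
    (d p : ℕ) (hd : 1 ≤ d) (hp : 1 ≤ p)
    (A h : ℕ → Fin d → ℝ)
    (hApos : ∀ n j, 0 < A n j) (hhpos : ∀ n j, 0 < h n j)
    (hAinf : ∀ j, Tendsto (fun n => A n j) atTop atTop)
    (hh0 : ∀ j, Tendsto (fun n => h n j) atTop (𝓝 0))
    (hnh : Tendsto (fun n : ℕ => (n : ℝ) * ∏ j, h n j) atTop atTop)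
    (X : ℕ → ℕ → Ω → (Fin d → ℝ))
    (hXmeas : ∀ n i, Measurable (X n i))
    (g : (Fin d → ℝ) → ℝ)
    (hgmeas : Measurable g) (Cg : ℝ) (hgbd : ∀ x, |g x| ≤ Cg)
    (hgnonneg : ∀ x, 0 ≤ g x)
    (hgsupp : ∀ x, x ∉ R0 d → g x = 0)
    (hgint : ∫ x : Fin d → ℝ, g x = 1)
    (hgcont : ContinuousAt g 0)
    (hXdens : ∀ n i, i < n → Measure.map (X n i) P =
      volume.withDensity (fun x =>
        ENNReal.ofReal ((∏ j, A n j)⁻¹ * g (scaled (A n) x))))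
    (hXindep : ∀ n, iIndepFun (fun i : Fin n => X n i) P)
    (K : (Fin d → ℝ) → ℝ)
    (hKmeas : Measurable K) (CK : ℝ) (hKbd : ∀ z, |K z| ≤ CK)
    (hKsupp : ∀ z, z ∉ R0 d → K z = 0)
    (hKint : ∫ z : Fin d → ℝ, K z = 1) :
    ∀ ν μ : Idx d p, ∀ δ : ℝ, 0 < δ →
      Tendsto (fun n : ℕ =>
          (P {ω | δ < |(1 / ((n : ℝ) * ∏ j, h n j)) *
              (∑ i ∈ Finset.range n, KAh K (A n) (h n) (X n i ω) *
                (mono (fun j => X n i ω j / (A n j * h n j)) (fun j => (ν.1 j : ℕ)) *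
                 mono (fun j => X n i ω j / (A n j * h n j)) (fun j => (μ.1 j : ℕ)))) -
              g 0 * Smat d p K ν μ|}).toReal)
        atTop (𝓝 0) := by
  intro ν μ δ hδ
  have hCK0 : 0 ≤ CK := le_trans (abs_nonneg _) (hKbd 0)
  set F : (Fin d → ℝ) → ℝ := fun z =>
    K z * (mono z (fun j => (ν.1 j : ℕ)) * mono z (fun j => (μ.1 j : ℕ))) with hFdef
  have hmonoC : ∀ e : Fin d → ℕ, Continuous fun x : Fin d → ℝ => mono x e := by
    intro e
    unfold mono
    exact continuous_finset_prod _ fun j _ => (continuous_apply j).pow _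
  have hFmeas : Measurable F :=
    hKmeas.mul (((hmonoC _).measurable).mul ((hmonoC _).measurable))
  have hmono_le : ∀ (z : Fin d → ℝ) (e : Fin d → ℕ), z ∈ R0 d → |mono z e| ≤ 1 := by
    intro z e hz
    rw [R0, Set.mem_Icc] at hz
    unfold mono
    rw [Finset.abs_prod]
    refine Finset.prod_le_one (fun j _ => abs_nonneg _) fun j _ => ?_
    rw [abs_pow]
    refine pow_le_one₀ (abs_nonneg _) ?_
    have h1 := hz.1 j
    have h2 := hz.2 j
    simp only [Pi.le_def] at h1 h2
    rw [abs_le]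
    constructor <;> [linarith [hz.1 j]; linarith [hz.2 j]]
  have hFsupp : ∀ z, z ∉ R0 d → F z = 0 := by
    intro z hz
    rw [hFdef]
    simp only
    rw [hKsupp z hz, zero_mul]
  have hFbd : ∀ z, |F z| ≤ CK := by
    intro z
    by_cases hz : z ∈ R0 d
    · rw [hFdef]
      simp only
      rw [abs_mul, abs_mul]
      calc |K z| * (|mono z fun j => (ν.1 j : ℕ)| * |mono z fun j => (μ.1 j : ℕ)|)
          ≤ CK * (1 * 1) := by
            refine mul_le_mul (hKbd z) ?_ (by positivity) hCK0
            exact mul_le_mul (hmono_le z _ hz) (hmono_le z _ hz) (abs_nonneg _) zero_le_one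
        _ = CK := by ring
    · rw [hFsupp z hz]
      simpa using hCK0
  have hFS : ∫ z, F z = Smat d p K ν μ := by
    unfold Smat
    congr 1
    funext z
    rw [hFdef]
    ring
  rw [← hFS]
  exact key P d A h hApos hhpos hh0 hnh X hXmeas g hgmeas Cg hgbd hgnonneg hgcont
    hXdens hXindep F hFmeas CK hFbd hFsupp δ hδ
end
end

section
/- Let σ ∈ L¹(ℝ^d), let K : ℝ^d → ℝ be bounded measurable with support contained in [−1/2,1/2]^d, and let w : ℝ^d → ℝ be bounded measurable and continuous at 0. Let (h_{n,1},…,h_{n,d}) and (A_{n,1},…,A_{n,d}) be positive sequences with h_{n,j} → 0 and A_{n,j}h_{n,j} → ∞ for each j as n → ∞. Then, writing K_{h_n}(y) := K(y_1/h_{n,1},…,y_d/h_{n,d}), σ(A_n∘u) := σ(A_{n,1}u_1,…,A_{n,d}u_d), |A_n| := ∏_j A_{n,j}, |h_n| := ∏_j h_{n,j}: ( |A_n|/|h_n| )·∫_{ℝ^d}∫_{ℝ^d} σ(A_n∘(y_1−y_2))·K_{h_n}(y_1)K_{h_n}(y_2)·w(y_1)w(y_2)·dy_1dy_2 → w(0)²·(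 ∫_{ℝ^d}σ(v)dv )·( ∫_{ℝ^d}K²(z)dz ) as n → ∞. -/
set_option autoImplicit false

open MeasureTheory Filter Topology

noncomputable section

section Helpers
variable {d : ℕ}

/-- componentwise scaling change of variables on `Fin d → ℝ`. -/
lemma integral_comp_diag (c : Fin d → ℝ) (hc : ∀ j, c j ≠ 0) (f : (Fin d → ℝ) → ℝ) :
    ∫ x : Fin d → ℝ, f (fun j => c j * x j) = |∏ j, c j|⁻¹ * ∫ x, f x := by
  classical
  set L := Matrix.toLin' (Matrix.diagonal c) with hL
  have hdet : LinearMap.det L = ∏ j, c j := by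
    rw [hL, LinearMap.det_toLin', Matrix.det_diagonal]
  have hdet0 : LinearMap.det L ≠ 0 := by
    rw [hdet]; exact Finset.prod_ne_zero_iff.2 fun j _ => hc j
  have hLfun : ∀ x : Fin d → ℝ, L x = fun j => c j * x j := by
    intro x; funext j
    simp [hL, Matrix.toLin'_apply, Matrix.mulVec_diagonal]
  let e : (Fin d → ℝ) ≃ᵐ (Fin d → ℝ) :=
    { toFun := fun x j => c j * x j
      invFun := fun y j => (c j)⁻¹ * y j
      left_inv := fun x => by funext j; simp only []; rw [inv_mul_cancel_left₀ (hc j)]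
      right_inv := fun y => by funext j; simp only []; rw [mul_inv_cancel_left₀ (hc j)]
      measurable_toFun := (by fun_prop :
        Measurable fun x : Fin d → ℝ => fun j => c j * x j)
      measurable_invFun := (by fun_prop :
        Measurable fun y : Fin d → ℝ => fun j => (c j)⁻¹ * y j) }
  have hmap : Measure.map (⇑e) volume = ENNReal.ofReal |(∏ j, c j)⁻¹| • volume := by
    have : (⇑e : (Fin d → ℝ) → (Fin d → ℝ)) = ⇑L := by
      funext x; exact (hLfun x).symm
    rw [this, Measure.map_linearMap_addHaar_eq_smul_addHaar volume hdet0, hdet]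
  have h1 : ∫ x : Fin d → ℝ, f (fun j => c j * x j) = ∫ x, f (e x) := rfl
  rw [h1, ← integral_map_equiv e f, hmap, integral_smul_measure,
    ENNReal.toReal_ofReal (abs_nonneg _), abs_inv, smul_eq_mul]

/-- L¹ continuity of translation along a sequence tending to 0. -/
lemma tendsto_L1_translate (f : (Fin d → ℝ) → ℝ) (hf : Integrable f)
    (a : ℕ → Fin d → ℝ) (ha : Tendsto a atTop (𝓝 0)) :
    Tendsto (fun n => ∫ z : Fin d → ℝ, |f (z - a n) - f z|) atTop (𝓝 0) := by
  rw [NormedAddCommGroup.tendsto_nhds_zero]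
  intro ε hε
  obtain ⟨g, g_supp, hfg, g_cont, g_int⟩ :=
    hf.exists_hasCompactSupport_integral_sub_le (by positivity : (0:ℝ) < ε/4)
  obtain ⟨M, hM⟩ := g_supp.exists_bound_of_continuous g_cont
  set C : Set (Fin d → ℝ) := Metric.cthickening 1 (tsupport g) with hC
  have hCcomp : IsCompact C := g_supp.cthickening
  have hCmeas : MeasurableSet C := Metric.isClosed_cthickening.measurableSet
  have hbound_int : Integrable (C.indicator fun _ => 2 * M) := by
    rw [integrable_indicator_iff hCmeas]
    exact integrableOn_const hCcomp.measure_lt_top.ne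
  -- middle term tends to zero
  have key : Tendsto (fun n => ∫ z : Fin d → ℝ, |g (z - a n) - g z|) atTop (𝓝 0) := by
    have h0 : (0:ℝ) = ∫ z : Fin d → ℝ, (0:ℝ) := by simp
    rw [h0]
    apply tendsto_integral_filter_of_dominated_convergence
      (C.indicator fun _ => 2 * M)
    · exact Eventually.of_forall fun n =>
        ((g_cont.comp (continuous_id.sub continuous_const)).sub g_cont).abs.aestronglyMeasurable
    · have hev : ∀ᶠ n in atTop, a n ∈ Metric.closedBall (0 : Fin d → ℝ) 1 :=
        ha.eventually (Metric.closedBall_mem_nhds 0 one_pos)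
      filter_upwards [hev] with n hn
      filter_upwards with z
      by_cases hz : z ∈ C
      · rw [Set.indicator_of_mem hz]
        calc ‖|g (z - a n) - g z|‖ = |g (z - a n) - g z| := by rw [Real.norm_eq_abs, abs_abs]
          _ ≤ |g (z - a n)| + |g z| := abs_sub _ _
          _ ≤ M + M := add_le_add (by simpa using hM (z - a n)) (by simpa using hM z)
          _ = 2 * M := by ring
      · rw [Set.indicator_of_notMem hz]
        have hgz : g z = 0 := by
          apply image_eq_zero_of_notMem_tsupport
          intro hzt
          exact hz (Metric.self_subset_cthickening _ hzt)
        have hgza : g (z - a n) = 0 := by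
          apply image_eq_zero_of_notMem_tsupport
          intro hzt
          apply hz
          apply Metric.mem_cthickening_of_dist_le z (z - a n) 1 _ hzt
          have : dist z (z - a n) = ‖a n‖ := by
            rw [dist_eq_norm]; congr 1; abel
          rw [this]
          simpa using hn
        simp [hgz, hgza]
    · exact hbound_int
    · filter_upwards with z
      have h1 : Tendsto (fun n => z - a n) atTop (𝓝 z) := by
        simpa using tendsto_const_nhds.sub ha
      have := ((g_cont.tendsto z).comp h1).sub (tendsto_const_nhds (x := g z))
      simpa using this.abs
  have hkey2 : ∀ᶠ n in atTop, ∫ z : Fin d → ℝ, |g (z - a n) - g z| < ε/4 := by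
    have := key.eventually (eventually_lt_nhds (by positivity : (0:ℝ) < ε/4))
    simpa using this
  filter_upwards [hkey2] with n hn
  have hint1 : Integrable (fun z : Fin d → ℝ => f (z - a n)) := hf.comp_sub_right (a n)
  have hint2 : Integrable (fun z : Fin d → ℝ => g (z - a n)) := g_int.comp_sub_right (a n)
  have i1 : Integrable (fun z : Fin d → ℝ => |f (z - a n) - g (z - a n)|) :=
    (hint1.sub hint2).abs
  have i2 : Integrable (fun z : Fin d → ℝ => |g (z - a n) - g z|) := (hint2.sub g_int).abs
  have i3 : Integrable (fun z : Fin d → ℝ => |g z - f z|) := (g_int.sub hf).abs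
  have i0 : Integrable (fun z : Fin d → ℝ => |f (z - a n) - f z|) := (hint1.sub hf).abs
  have htri : ∫ z : Fin d → ℝ, |f (z - a n) - f z| ≤
      (∫ z : Fin d → ℝ, |f (z - a n) - g (z - a n)|) +
      ((∫ z : Fin d → ℝ, |g (z - a n) - g z|) + ∫ z : Fin d → ℝ, |g z - f z|) := by
    have i23 : Integrable (fun z : Fin d → ℝ => |g (z - a n) - g z| + |g z - f z|) := i2.add i3
    have i123 : Integrable (fun z : Fin d → ℝ =>
        |f (z - a n) - g (z - a n)| + (|g (z - a n) - g z| + |g z - f z|)) := i1.add i23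
    rw [← integral_add i2 i3, ← integral_add i1 i23]
    apply integral_mono i0 i123
    intro z
    calc |f (z - a n) - f z| =
        |(f (z - a n) - g (z - a n)) + ((g (z - a n) - g z) + (g z - f z))| := by ring_nf
      _ ≤ _ := by
          refine (abs_add_le _ _).trans (add_le_add le_rfl (abs_add_le _ _))
  have e1 : ∫ z : Fin d → ℝ, |f (z - a n) - g (z - a n)| = ∫ z : Fin d → ℝ, |f z - g z| :=
    integral_sub_right_eq_self (fun z => |f z - g z|) (a n)
  have e2 : ∫ z : Fin d → ℝ, |f z - g z| ≤ ε/4 := by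
    simpa [Real.norm_eq_abs] using hfg
  have e3 : ∫ z : Fin d → ℝ, |g z - f z| ≤ ε/4 := by
    calc ∫ z : Fin d → ℝ, |g z - f z| = ∫ z : Fin d → ℝ, |f z - g z| := by
          congr 1; funext z; rw [abs_sub_comm]
      _ ≤ ε/4 := e2
  have hnn : (0:ℝ) ≤ ∫ z : Fin d → ℝ, |f (z - a n) - f z| :=
    integral_nonneg fun z => abs_nonneg _
  rw [Real.norm_eq_abs, abs_of_nonneg hnn]
  calc ∫ z : Fin d → ℝ, |f (z - a n) - f z| ≤ _ := htri
    _ ≤ ε/4 + (ε/4 + ε/4) := by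
        rw [e1]
        exact add_le_add e2 (add_le_add hn.le e3)
    _ < ε := by linarith

lemma abs_sq_bound (k w1 w2 Cw : ℝ) (hw1 : |w1| ≤ Cw) (hw2 : |w2| ≤ Cw) :
    |(k * k) * (w1 * w2)| ≤ k ^ 2 * (Cw * Cw) := by
  have hCw : 0 ≤ Cw := (abs_nonneg _).trans hw1
  calc |(k * k) * (w1 * w2)| = k ^ 2 * (|w1| * |w2|) := by
        rw [abs_mul, abs_mul, abs_mul]
        have : |k| * |k| = k ^ 2 := by rw [← sq_abs]; ring
        rw [this]
    _ ≤ k ^ 2 * (Cw * Cw) := by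
        refine mul_le_mul_of_nonneg_left ?_ (sq_nonneg k)
        exact mul_le_mul hw1 hw2 (abs_nonneg _) hCw

lemma abs_diff_bound (k1 k2 w1 w2 CK Cw : ℝ) (hk1 : |k1| ≤ CK) (hk2 : |k2| ≤ CK)
    (hw1 : |w1| ≤ Cw) (hw2 : |w2| ≤ Cw) :
    |(k1 * (k2 - k1)) * (w1 * w2)| ≤ |k1| * ((CK + CK) * (Cw * Cw)) := by
  have hCw : 0 ≤ Cw := (abs_nonneg _).trans hw1
  have hd : |k2 - k1| ≤ CK + CK := (abs_sub _ _).trans (add_le_add hk2 hk1)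
  calc |(k1 * (k2 - k1)) * (w1 * w2)| = |k1| * |k2 - k1| * (|w1| * |w2|) := by
        rw [abs_mul, abs_mul, abs_mul]
    _ ≤ |k1| * (CK + CK) * (Cw * Cw) :=
        mul_le_mul (mul_le_mul_of_nonneg_left hd (abs_nonneg _))
          (mul_le_mul hw1 hw2 (abs_nonneg _) hCw)
          (mul_nonneg (abs_nonneg _) (abs_nonneg _))
          (mul_nonneg (abs_nonneg _) (by linarith [(abs_nonneg k1).trans hk1]))
    _ = |k1| * ((CK + CK) * (Cw * Cw)) := by ring

lemma abs_diff_bound2 (k1 k2 w1 w2 CK Cw : ℝ) (hk1 : |k1| ≤ CK)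
    (hw1 : |w1| ≤ Cw) (hw2 : |w2| ≤ Cw) :
    |(k1 * (k2 - k1)) * (w1 * w2)| ≤ CK * (Cw * Cw) * |k2 - k1| := by
  have hCw : 0 ≤ Cw := (abs_nonneg _).trans hw1
  calc |(k1 * (k2 - k1)) * (w1 * w2)| = |k1| * |k2 - k1| * (|w1| * |w2|) := by
        rw [abs_mul, abs_mul, abs_mul]
    _ ≤ CK * |k2 - k1| * (Cw * Cw) :=
        mul_le_mul (mul_le_mul_of_nonneg_right hk1 (abs_nonneg _))
          (mul_le_mul hw1 hw2 (abs_nonneg _) hCw)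
          (mul_nonneg (abs_nonneg _) (abs_nonneg _))
          (mul_nonneg ((abs_nonneg k1).trans hk1) (abs_nonneg _))
    _ = CK * (Cw * Cw) * |k2 - k1| := by ring

/-- trivial integrable bound by a multiple of an indicator of a cube. -/
lemma K_integrable (K : (Fin d → ℝ) → ℝ) (hKmeas : Measurable K) (CK : ℝ)
    (hKbd : ∀ z, |K z| ≤ CK)
    (hKsupp : ∀ z : Fin d → ℝ,
      z ∉ Set.Icc (fun _ => -(1/2 : ℝ)) (fun _ => (1/2 : ℝ)) → K z = 0) :
    Integrable K := by
  set Q : Set (Fin d → ℝ) := Set.Icc (fun _ => -(1/2 : ℝ)) (fun _ => (1/2 : ℝ)) with hQ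
  have hQm : MeasurableSet Q := measurableSet_Icc
  have hg : Integrable (Q.indicator fun _ => CK) := by
    rw [integrable_indicator_iff hQm]
    exact integrableOn_const isCompact_Icc.measure_lt_top.ne
  refine hg.mono' hKmeas.aestronglyMeasurable ?_
  filter_upwards with z
  by_cases hz : z ∈ Q
  · rw [Set.indicator_of_mem hz]; simpa using hKbd z
  · rw [Set.indicator_of_notMem hz, hKsupp z hz]; simp

lemma abs_prod_bound (s k1 k2 w1 w2 CK Cw : ℝ) (hk2 : |k2| ≤ CK) (hw1 : |w1| ≤ Cw)
    (hw2 : |w2| ≤ Cw) :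
    |s * ((k1 * k2) * (w1 * w2))| ≤ |k1| * (CK * (Cw * Cw)) * |s| := by
  have h0 : 0 ≤ |k1| := abs_nonneg _
  have hCK : 0 ≤ CK := (abs_nonneg _).trans hk2
  have hCw : 0 ≤ Cw := (abs_nonneg _).trans hw1
  calc |s * ((k1 * k2) * (w1 * w2))| = |s| * (|k1| * |k2| * (|w1| * |w2|)) := by
        rw [abs_mul, abs_mul, abs_mul, abs_mul]
    _ ≤ |s| * (|k1| * CK * (Cw * Cw)) := by
        refine mul_le_mul_of_nonneg_left ?_ (abs_nonneg s)
        exact mul_le_mul (mul_le_mul_of_nonneg_left hk2 h0)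
          (mul_le_mul hw1 hw2 (abs_nonneg _) hCw)
          (mul_nonneg (abs_nonneg _) (abs_nonneg _)) (mul_nonneg h0 hCK)
    _ = |k1| * (CK * (Cw * Cw)) * |s| := by ring

lemma main_ident (σ K w : (Fin d → ℝ) → ℝ)
    (hσint : Integrable σ)
    (hKmeas : Measurable K) (CK : ℝ) (hKbd : ∀ z, |K z| ≤ CK)
    (hKint : Integrable K)
    (hwmeas : Measurable w) (Cw : ℝ) (hwbd : ∀ z, |w z| ≤ Cw)
    (a b : Fin d → ℝ) (ha : ∀ j, 0 < a j) (hb : ∀ j, 0 < b j) :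
    ((∏ j, a j) / (∏ j, b j)) *
      ∫ y₁ : Fin d → ℝ, ∫ y₂ : Fin d → ℝ,
        σ (fun j => a j * (y₁ j - y₂ j)) *
          (K (fun j => y₁ j / b j) * K (fun j => y₂ j / b j)) * (w y₁ * w y₂)
    = ∫ u : Fin d → ℝ, σ u *
        ∫ z : Fin d → ℝ,
          (K z * K (fun j => z j - (a j * b j)⁻¹ * u j)) *
            (w (fun j => b j * z j) * w (fun j => b j * z j - (a j)⁻¹ * u j)) := by
  have haz : ∀ j, a j ≠ 0 := fun j => (ha j).ne'
  have hbz : ∀ j, b j ≠ 0 := fun j => (hb j).ne'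
  have hPpos : 0 < ∏ j, a j := Finset.prod_pos fun j _ => ha j
  have hQpos : 0 < ∏ j, b j := Finset.prod_pos fun j _ => hb j
  set P := ∏ j, a j
  set Q := ∏ j, b j
  -- inner substitution
  have h1 : ∀ y₁ : Fin d → ℝ,
      (∫ y₂ : Fin d → ℝ,
        σ (fun j => a j * (y₁ j - y₂ j)) *
          (K (fun j => y₁ j / b j) * K (fun j => y₂ j / b j)) * (w y₁ * w y₂))
      = P⁻¹ * ∫ u : Fin d → ℝ,
          σ u * (K (fun j => y₁ j / b j) * K (fun j => (y₁ j - (a j)⁻¹ * u j) / b j)) *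
            (w y₁ * w (fun j => y₁ j - (a j)⁻¹ * u j)) := by
    intro y₁
    have e1 := (integral_sub_left_eq_self
      (fun y₂ : Fin d → ℝ =>
        σ (fun j => a j * (y₁ j - y₂ j)) *
          (K (fun j => y₁ j / b j) * K (fun j => y₂ j / b j)) * (w y₁ * w y₂))
      volume y₁).symm
    rw [e1]
    have e2 := integral_comp_diag (fun j => (a j)⁻¹) (fun j => inv_ne_zero (haz j))
      (fun t : Fin d → ℝ =>
        σ (fun j => a j * (y₁ j - (y₁ - t) j)) *
          (K (fun j => y₁ j / b j) * K (fun j => (y₁ - t) j / b j)) * (w y₁ * w (y₁ - t)))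
    have habs : |∏ j, (a j)⁻¹| = P⁻¹ := by
      rw [Finset.prod_inv_distrib, abs_inv, abs_of_pos hPpos]
    rw [habs, inv_inv] at e2
    rw [eq_comm, inv_mul_eq_iff_eq_mul₀ hPpos.ne', ← e2]
    refine integral_congr_ae (Filter.Eventually.of_forall fun x => ?_)
    have hσa : (fun j => a j * (y₁ j - (y₁ - fun j => (a j)⁻¹ * x j) j)) = x := by
      funext j; simp [mul_inv_cancel_left₀ (haz j)]
    have hKa : (fun j => (y₁ - fun j => (a j)⁻¹ * x j) j / b j)
        = (fun j => (y₁ j - (a j)⁻¹ * x j) / b j) := by funext j; simp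
    have hwa : (y₁ - fun j => (a j)⁻¹ * x j) = (fun j => y₁ j - (a j)⁻¹ * x j) := rfl
    beta_reduce
    rw [hσa, hKa, hwa]
  -- step 2: rewrite inner integrals, pull out constants
  rw [integral_congr_ae (Filter.Eventually.of_forall h1), integral_const_mul]
  -- step 3: outer scaling substitution
  set G : (Fin d → ℝ) → ℝ := fun y₁ => ∫ u : Fin d → ℝ,
      σ u * (K (fun j => y₁ j / b j) * K (fun j => (y₁ j - (a j)⁻¹ * u j) / b j)) *
        (w y₁ * w (fun j => y₁ j - (a j)⁻¹ * u j)) with hG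
  have e3 := integral_comp_diag b hbz G
  have habsQ : |∏ j, b j| = Q := abs_of_pos hQpos
  rw [habsQ] at e3
  have e4 : ∫ y₁, G y₁ = Q * ∫ z : Fin d → ℝ, G (fun j => b j * z j) := by
    rw [e3]; field_simp
  rw [e4]
  have hconst : P / Q * (P⁻¹ * (Q * ∫ z : Fin d → ℝ, G (fun j => b j * z j)))
      = ∫ z : Fin d → ℝ, G (fun j => b j * z j) := by
    field_simp
  rw [hconst]
  -- step 3b : pointwise simplification of the substituted integrand
  have h5 : ∀ z : Fin d → ℝ, G (fun j => b j * z j)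
      = ∫ u : Fin d → ℝ,
          σ u * ((K z * K (fun j => z j - (a j * b j)⁻¹ * u j)) *
            (w (fun j => b j * z j) * w (fun j => b j * z j - (a j)⁻¹ * u j))) := by
    intro z
    rw [hG]
    refine integral_congr_ae (Filter.Eventually.of_forall fun u => ?_)
    beta_reduce
    have hK1a : (fun j => b j * z j / b j) = z := by
      funext j; exact mul_div_cancel_left₀ (z j) (hbz j)
    have hK2a : (fun j => (b j * z j - (a j)⁻¹ * u j) / b j)
        = (fun j => z j - (a j * b j)⁻¹ * u j) := by
      funext j; rw [sub_div, mul_div_cancel_left₀ _ (hbz j), mul_inv, div_eq_mul_inv]; ring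
    rw [hK1a, hK2a, mul_assoc]
  rw [integral_congr_ae (Filter.Eventually.of_forall h5)]
  -- step 4 : Fubini
  have hXmeas : Measurable (fun p : (Fin d → ℝ) × (Fin d → ℝ) =>
      (K p.1 * K (fun j => p.1 j - (a j * b j)⁻¹ * p.2 j)) *
        (w (fun j => b j * p.1 j) * w (fun j => b j * p.1 j - (a j)⁻¹ * p.2 j))) := by
    have m1 : Measurable fun p : (Fin d → ℝ) × (Fin d → ℝ) => K p.1 := hKmeas.comp measurable_fst
    have m2 : Measurable fun p : (Fin d → ℝ) × (Fin d → ℝ) =>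
        K (fun j => p.1 j - (a j * b j)⁻¹ * p.2 j) :=
      hKmeas.comp (measurable_pi_lambda _ fun j =>
        ((measurable_pi_apply j).comp measurable_fst).sub
          (((measurable_pi_apply j).comp measurable_snd).const_mul _))
    have m3 : Measurable fun p : (Fin d → ℝ) × (Fin d → ℝ) => w (fun j => b j * p.1 j) :=
      hwmeas.comp (measurable_pi_lambda _ fun j =>
        ((measurable_pi_apply j).comp measurable_fst).const_mul _)
    have m4 : Measurable fun p : (Fin d → ℝ) × (Fin d → ℝ) =>
        w (fun j => b j * p.1 j - (a j)⁻¹ * p.2 j) :=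
      hwmeas.comp (measurable_pi_lambda _ fun j =>
        (((measurable_pi_apply j).comp measurable_fst).const_mul _).sub
          (((measurable_pi_apply j).comp measurable_snd).const_mul _))
    exact (m1.mul m2).mul (m3.mul m4)
  have hCw0 : 0 ≤ Cw := le_trans (abs_nonneg _) (hwbd 0)
  have hCK0 : 0 ≤ CK := le_trans (abs_nonneg _) (hKbd 0)
  have hdom : Integrable (fun p : (Fin d → ℝ) × (Fin d → ℝ) =>
      (|K p.1| * (CK * (Cw * Cw))) * |σ p.2|) (volume.prod volume) :=
    Integrable.mul_prod (hKint.abs.mul_const _) hσint.abs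
  have hFub : Integrable (Function.uncurry fun z u : Fin d → ℝ =>
      σ u * ((K z * K (fun j => z j - (a j * b j)⁻¹ * u j)) *
        (w (fun j => b j * z j) * w (fun j => b j * z j - (a j)⁻¹ * u j))))
      (volume.prod volume) := by
    refine hdom.mono' ?_ ?_
    · exact (hσint.aestronglyMeasurable.comp_snd.mul
        hXmeas.aestronglyMeasurable)
    · filter_upwards with p
      rw [Real.norm_eq_abs]
      exact abs_prod_bound _ _ _ _ _ _ _ (hKbd _) (hwbd _) (hwbd _)
  rw [integral_integral_swap hFub]
  refine integral_congr_ae (Filter.Eventually.of_forall fun u => ?_)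
  exact integral_const_mul _ _

end Helpers

/-- the deterministic scaling limit underlying the spatial-dependence
component of the asymptotic variance: if `σ ∈ L¹(ℝ^d)`, `K` is bounded measurable with
support in `[−1/2,1/2]^d`, `w` is bounded measurable and continuous at `0`, and the
positive sequences satisfy `h_{n,j} → 0`, `A_{n,j} h_{n,j} → ∞`, then
`(|A_n|/|h_n|) ∬ σ(A_n∘(y₁−y₂)) K_{h_n}(y₁) K_{h_n}(y₂) w(y₁) w(y₂) dy₁ dy₂
  → w(0)² (∫σ)(∫K²)`. -/
theorem covariance_scaling_limit
    (d : ℕ) (hd : 1 ≤ d)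
    (σ K w : (Fin d → ℝ) → ℝ)
    (hσint : Integrable σ)
    (hKmeas : Measurable K) (CK : ℝ) (hKbd : ∀ z, |K z| ≤ CK)
    (hKsupp : ∀ z : Fin d → ℝ,
      z ∉ Set.Icc (fun _ => -(1/2 : ℝ)) (fun _ => (1/2 : ℝ)) → K z = 0)
    (hwmeas : Measurable w) (Cw : ℝ) (hwbd : ∀ z, |w z| ≤ Cw)
    (hwcont : ContinuousAt w 0)
    (A h : ℕ → Fin d → ℝ)
    (hA : ∀ n j, 0 < A n j) (hh : ∀ n j, 0 < h n j)
    (hh0 : ∀ j, Tendsto (fun n => h n j) atTop (𝓝 0))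
    (hAh : ∀ j, Tendsto (fun n => A n j * h n j) atTop atTop) :
    Tendsto (fun n =>
        ((∏ j, A n j) / (∏ j, h n j)) *
          ∫ y₁ : Fin d → ℝ, ∫ y₂ : Fin d → ℝ,
            σ (fun j => A n j * (y₁ j - y₂ j)) *
              (K (fun j => y₁ j / h n j) * K (fun j => y₂ j / h n j)) *
              (w y₁ * w y₂))
      atTop
      (𝓝 (w 0 ^ 2 * (∫ v : Fin d → ℝ, σ v) * ∫ z : Fin d → ℝ, (K z) ^ 2)) := by
  have hCw0 : (0:ℝ) ≤ Cw := (abs_nonneg _).trans (hwbd 0)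
  have hCK0 : (0:ℝ) ≤ CK := (abs_nonneg _).trans (hKbd 0)
  have hK1 : Integrable K := K_integrable K hKmeas CK hKbd hKsupp
  have hK2 : Integrable (fun z : Fin d → ℝ => K z ^ 2) :=
    K_integrable _ (hKmeas.pow_const 2) (CK ^ 2)
      (fun z => by rw [abs_pow]; exact pow_le_pow_left₀ (abs_nonneg _) (hKbd z) 2)
      (fun z hz => by rw [hKsupp z hz]; ring)
  -- divergence of A
  have hAtop : ∀ j, Tendsto (fun n => A n j) atTop atTop := by
    intro j
    have h1 : Tendsto (fun n => (h n j)⁻¹) atTop atTop := by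
      apply Filter.Tendsto.inv_tendsto_nhdsGT_zero
      exact tendsto_nhdsWithin_of_tendsto_nhds_of_eventually_within _ (hh0 j)
        (Filter.Eventually.of_forall fun n => hh n j)
    have h2 := (hAh j).atTop_mul_atTop₀ h1
    refine h2.congr fun n => ?_
    exact mul_inv_cancel_right₀ (hh n j).ne' (A n j)
  have hAinv0 : ∀ j, Tendsto (fun n => (A n j)⁻¹) atTop (𝓝 0) :=
    fun j => tendsto_inv_atTop_zero.comp (hAtop j)
  have hABinv0 : ∀ j, Tendsto (fun n => (A n j * h n j)⁻¹) atTop (𝓝 0) :=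
    fun j => tendsto_inv_atTop_zero.comp (hAh j)
  -- the rescaled form of the expression
  set I : ℕ → (Fin d → ℝ) → ℝ := fun n u =>
    ∫ z : Fin d → ℝ,
      (K z * K (fun j => z j - (A n j * h n j)⁻¹ * u j)) *
        (w (fun j => h n j * z j) * w (fun j => h n j * z j - (A n j)⁻¹ * u j)) with hIdef
  have hident : ∀ n,
      ((∏ j, A n j) / (∏ j, h n j)) *
        ∫ y₁ : Fin d → ℝ, ∫ y₂ : Fin d → ℝ,
          σ (fun j => A n j * (y₁ j - y₂ j)) *
            (K (fun j => y₁ j / h n j) * K (fun j => y₂ j / h n j)) *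
            (w y₁ * w y₂)
      = ∫ u : Fin d → ℝ, σ u * I n u := fun n =>
    main_ident σ K w hσint hKmeas CK hKbd hK1 hwmeas Cw hwbd (A n) (h n) (hA n) (hh n)
  -- limit of the inner integral, for every fixed u
  have hlim : ∀ u : Fin d → ℝ,
      Tendsto (fun n => I n u) atTop (𝓝 (w 0 ^ 2 * ∫ z : Fin d → ℝ, K z ^ 2)) := by
    intro u
    set aseq : ℕ → Fin d → ℝ := fun n j => (A n j * h n j)⁻¹ * u j with haseq
    have ha0 : Tendsto aseq atTop (𝓝 0) := by
      rw [tendsto_pi_nhds]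
      intro j
      have h0 := (hABinv0 j).mul_const (u j)
      rw [zero_mul] at h0
      exact h0
    -- measurability of the weight part
    have hψmeas : ∀ n, Measurable fun z : Fin d → ℝ =>
        w (fun j => h n j * z j) * w (fun j => h n j * z j - (A n j)⁻¹ * u j) := by
      intro n
      refine (hwmeas.comp (measurable_pi_lambda _ fun j =>
        (measurable_pi_apply j).const_mul _)).mul
        (hwmeas.comp (measurable_pi_lambda _ fun j =>
          ((measurable_pi_apply j).const_mul _).sub measurable_const))
    -- integrability of the pieces
    have i1 : ∀ n, Integrable (fun z : Fin d → ℝ =>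
        (K z * (K (z - aseq n) - K z)) *
          (w (fun j => h n j * z j) * w (fun j => h n j * z j - (A n j)⁻¹ * u j))) := by
      intro n
      refine (hK1.abs.mul_const ((CK + CK) * (Cw * Cw))).mono' ?_ ?_
      · exact ((hKmeas.mul (((hKmeas.comp (measurable_id.sub measurable_const))).sub
          hKmeas)).mul (hψmeas n)).aestronglyMeasurable
      · filter_upwards with z
        rw [Real.norm_eq_abs]
        exact abs_diff_bound _ _ _ _ _ _ (hKbd _) (hKbd _) (hwbd _) (hwbd _)
    have i2 : ∀ n, Integrable (fun z : Fin d → ℝ =>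
        (K z * K z) *
          (w (fun j => h n j * z j) * w (fun j => h n j * z j - (A n j)⁻¹ * u j))) := by
      intro n
      refine (hK2.mul_const (Cw * Cw)).mono' ?_ ?_
      · exact ((hKmeas.mul hKmeas).mul (hψmeas n)).aestronglyMeasurable
      · filter_upwards with z
        rw [Real.norm_eq_abs]
        exact abs_sq_bound _ _ _ _ (hwbd _) (hwbd _)
    have hsplit : ∀ n, I n u =
        (∫ z : Fin d → ℝ, (K z * (K (z - aseq n) - K z)) *
          (w (fun j => h n j * z j) * w (fun j => h n j * z j - (A n j)⁻¹ * u j)))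
        + ∫ z : Fin d → ℝ, (K z * K z) *
          (w (fun j => h n j * z j) * w (fun j => h n j * z j - (A n j)⁻¹ * u j)) := by
      intro n
      rw [← integral_add (i1 n) (i2 n)]
      refine integral_congr_ae (Filter.Eventually.of_forall fun z => ?_)
      have harg : K (fun j => z j - (A n j * h n j)⁻¹ * u j) = K (z - aseq n) := rfl
      show (K z * K (fun j => z j - (A n j * h n j)⁻¹ * u j)) * _ = _
      rw [harg]
      ring
    -- first piece tends to zero
    have htrans := tendsto_L1_translate K hK1 aseq ha0
    have hT1 : Tendsto (fun n => ∫ z : Fin d → ℝ, (K z * (K (z - aseq n) - K z)) *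
        (w (fun j => h n j * z j) * w (fun j => h n j * z j - (A n j)⁻¹ * u j)))
        atTop (𝓝 0) := by
      have hbd : ∀ n, ‖∫ z : Fin d → ℝ, (K z * (K (z - aseq n) - K z)) *
          (w (fun j => h n j * z j) * w (fun j => h n j * z j - (A n j)⁻¹ * u j))‖
          ≤ CK * (Cw * Cw) * ∫ z : Fin d → ℝ, |K (z - aseq n) - K z| := by
        intro n
        have hgint : Integrable (fun z : Fin d → ℝ =>
            CK * (Cw * Cw) * |K (z - aseq n) - K z|) :=
          (((hK1.comp_sub_right (aseq n)).sub hK1).abs.const_mul _)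
        have hle := norm_integral_le_of_norm_le
          (f := fun z : Fin d → ℝ => (K z * (K (z - aseq n) - K z)) *
            (w (fun j => h n j * z j) * w (fun j => h n j * z j - (A n j)⁻¹ * u j)))
          hgint
          (Filter.Eventually.of_forall fun z => by
            rw [Real.norm_eq_abs]
            exact abs_diff_bound2 _ _ _ _ _ _ (hKbd _) (hwbd _) (hwbd _))
        rwa [integral_const_mul] at hle
      refine squeeze_zero_norm hbd ?_
      simpa using htrans.const_mul (CK * (Cw * Cw))
    -- second piece
    have hψlim : ∀ z : Fin d → ℝ, Tendsto (fun n =>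
        w (fun j => h n j * z j) * w (fun j => h n j * z j - (A n j)⁻¹ * u j))
        atTop (𝓝 (w 0 * w 0)) := by
      intro z
      have harg1 : Tendsto (fun n => fun j => h n j * z j) atTop (𝓝 (0 : Fin d → ℝ)) := by
        rw [tendsto_pi_nhds]; intro j
        have h0 := (hh0 j).mul_const (z j)
        rw [zero_mul] at h0
        exact h0
      have harg2 : Tendsto (fun n => fun j => h n j * z j - (A n j)⁻¹ * u j)
          atTop (𝓝 (0 : Fin d → ℝ)) := by
        rw [tendsto_pi_nhds]; intro j
        have h0 := ((hh0 j).mul_const (z j)).sub ((hAinv0 j).mul_const (u j))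
        rw [zero_mul, zero_mul, sub_zero] at h0
        exact h0
      exact (hwcont.tendsto.comp harg1).mul (hwcont.tendsto.comp harg2)
    have hT2 : Tendsto (fun n => ∫ z : Fin d → ℝ, (K z * K z) *
        (w (fun j => h n j * z j) * w (fun j => h n j * z j - (A n j)⁻¹ * u j)))
        atTop (𝓝 (∫ z : Fin d → ℝ, (K z * K z) * (w 0 * w 0))) := by
      refine tendsto_integral_of_dominated_convergence
        (fun z => K z ^ 2 * (Cw * Cw)) ?_ (hK2.mul_const _) ?_ ?_
      · exact fun n => ((hKmeas.mul hKmeas).mul (hψmeas n)).aestronglyMeasurable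
      · intro n
        filter_upwards with z
        rw [Real.norm_eq_abs]
        exact abs_sq_bound _ _ _ _ (hwbd _) (hwbd _)
      · filter_upwards with z
        exact tendsto_const_nhds.mul (hψlim z)
    have heq2 : ∫ z : Fin d → ℝ, (K z * K z) * (w 0 * w 0)
        = w 0 ^ 2 * ∫ z : Fin d → ℝ, K z ^ 2 := by
      rw [integral_mul_const]
      have : ∫ z : Fin d → ℝ, K z * K z = ∫ z : Fin d → ℝ, K z ^ 2 :=
        integral_congr_ae (Filter.Eventually.of_forall fun z => (pow_two (K z)).symm)
      rw [this]; ring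
    rw [heq2] at hT2
    have hsum := hT1.add hT2
    rw [zero_add] at hsum
    exact hsum.congr fun n => (hsplit n).symm
  -- dominated convergence in u
  have hImeas : ∀ n, AEStronglyMeasurable (fun u => σ u * I n u) volume := by
    intro n
    have hXm : Measurable (fun q : (Fin d → ℝ) × (Fin d → ℝ) =>
        (K q.2 * K (fun j => q.2 j - (A n j * h n j)⁻¹ * q.1 j)) *
          (w (fun j => h n j * q.2 j) *
            w (fun j => h n j * q.2 j - (A n j)⁻¹ * q.1 j))) := by
      have m1 : Measurable fun q : (Fin d → ℝ) × (Fin d → ℝ) => K q.2 :=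
        hKmeas.comp measurable_snd
      have m2 : Measurable fun q : (Fin d → ℝ) × (Fin d → ℝ) =>
          K (fun j => q.2 j - (A n j * h n j)⁻¹ * q.1 j) :=
        hKmeas.comp (measurable_pi_lambda _ fun j =>
          ((measurable_pi_apply j).comp measurable_snd).sub
            (((measurable_pi_apply j).comp measurable_fst).const_mul _))
      have m3 : Measurable fun q : (Fin d → ℝ) × (Fin d → ℝ) =>
          w (fun j => h n j * q.2 j) :=
        hwmeas.comp (measurable_pi_lambda _ fun j =>
          ((measurable_pi_apply j).comp measurable_snd).const_mul _)
      have m4 : Measurable fun q : (Fin d → ℝ) × (Fin d → ℝ) =>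
          w (fun j => h n j * q.2 j - (A n j)⁻¹ * q.1 j) :=
        hwmeas.comp (measurable_pi_lambda _ fun j =>
          (((measurable_pi_apply j).comp measurable_snd).const_mul _).sub
            (((measurable_pi_apply j).comp measurable_fst).const_mul _))
      exact (m1.mul m2).mul (m3.mul m4)
    exact hσint.aestronglyMeasurable.mul
      (hXm.stronglyMeasurable.integral_prod_right'.aestronglyMeasurable)
  have hIbd : ∀ n u, |I n u| ≤ CK * (Cw * Cw) * ∫ z : Fin d → ℝ, |K z| := by
    intro n u
    have hgint : Integrable (fun z : Fin d → ℝ => CK * (Cw * Cw) * |K z|) :=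
      hK1.abs.const_mul _
    have hle := norm_integral_le_of_norm_le
      (f := fun z : Fin d → ℝ => (K z * K (fun j => z j - (A n j * h n j)⁻¹ * u j)) *
        (w (fun j => h n j * z j) * w (fun j => h n j * z j - (A n j)⁻¹ * u j)))
      hgint
      (Filter.Eventually.of_forall fun z => by
        rw [Real.norm_eq_abs]
        have := abs_prod_bound 1 (K z) (K (fun j => z j - (A n j * h n j)⁻¹ * u j))
          (w (fun j => h n j * z j)) (w (fun j => h n j * z j - (A n j)⁻¹ * u j))
          CK Cw (hKbd _) (hwbd _) (hwbd _)
        calc |(K z * K (fun j => z j - (A n j * h n j)⁻¹ * u j)) *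
            (w (fun j => h n j * z j) * w (fun j => h n j * z j - (A n j)⁻¹ * u j))|
            = |1 * ((K z * K (fun j => z j - (A n j * h n j)⁻¹ * u j)) *
              (w (fun j => h n j * z j) *
                w (fun j => h n j * z j - (A n j)⁻¹ * u j)))| := by rw [one_mul]
          _ ≤ |K z| * (CK * (Cw * Cw)) * |1| := this
          _ = CK * (Cw * Cw) * |K z| := by rw [abs_one]; ring)
    rw [integral_const_mul] at hle
    rw [← Real.norm_eq_abs]
    exact hle
  have hMain : Tendsto (fun n => ∫ u : Fin d → ℝ, σ u * I n u) atTop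
      (𝓝 (∫ u : Fin d → ℝ, σ u * (w 0 ^ 2 * ∫ z : Fin d → ℝ, K z ^ 2))) := by
    refine tendsto_integral_of_dominated_convergence
      (fun u => |σ u| * (CK * (Cw * Cw) * ∫ z : Fin d → ℝ, |K z|))
      hImeas (hσint.abs.mul_const _) ?_ ?_
    · intro n
      filter_upwards with u
      rw [Real.norm_eq_abs, abs_mul]
      exact mul_le_mul_of_nonneg_left (hIbd n u) (abs_nonneg _)
    · filter_upwards with u
      exact tendsto_const_nhds.mul (hlim u)
  rw [integral_mul_const] at hMain
  have hc : (∫ v : Fin d → ℝ, σ v) * (w 0 ^ 2 * ∫ z : Fin d → ℝ, K z ^ 2)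
      = w 0 ^ 2 * (∫ v : Fin d → ℝ, σ v) * ∫ z : Fin d → ℝ, K z ^ 2 := by ring
  rw [hc] at hMain
  exact hMain.congr fun n => (hident n).symm
end
end

section
/- For every integer d ≥ 1 there exists a constant C > 0, depending only on d, such that for every finite subset I ⊂ ℤ^d and all integers k₂, k₃ ≥ 1: #{ (i, j, l, p) ∈ I⁴ : i, j, l, p pairwise distinct, d₂(i, j, l, p) = k₂ and d₃(i, j, l, p) = k₃ } ≤ C·(k₂ + k₃)^{3d−1}·#I, where for finite nonempty disjoint sets T₁, T₂ ⊂ ℤ^d, d(T₁,T₂) := min{ |x − y|₁ : x ∈ T₁, y ∈ T₂ } with |·|₁ the ℓ¹-norm, d₂(i,j,l,p) := max over one-element subsets J of {i,j,l,p} of d(J, {i,j,l,p}∖J), and d₃(i,j,l,p) := max over two-element subsets J of {i,j,l,p} of d(J, {i,j,l,p}∖J). -/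
set_option autoImplicit false
set_option linter.unusedVariables false

open Filter Topology

noncomputable section

/-- ℓ¹ distance between two lattice points. -/
def l1dist {d : ℕ} (x y : Fin d → ℤ) : ℤ := ∑ j, |x j - y j|

/-- `d({a},{b,c,e})`: distance of a singleton to the remaining three points. -/
def gap1to3 {d : ℕ} (a b c e : Fin d → ℤ) : ℤ :=
  min (l1dist a b) (min (l1dist a c) (l1dist a e))

/-- `d₂(i,j,l,p)`: the maximum, over the one-element subsets `J` of `{i,j,l,p}`,
of the minimal ℓ¹ distance from `J` to its complement. -/
def d2gap {d : ℕ} (i j l p : Fin d → ℤ) : ℤ :=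
  max (gap1to3 i j l p) (max (gap1to3 j i l p) (max (gap1to3 l i j p) (gap1to3 p i j l)))

/-- `d({a,b},{c,e})`: minimal ℓ¹ distance between two two-element sets. -/
def gap2to2 {d : ℕ} (a b c e : Fin d → ℤ) : ℤ :=
  min (min (l1dist a c) (l1dist a e)) (min (l1dist b c) (l1dist b e))

/-- `d₃(i,j,l,p)`: the maximum, over the two-element subsets `J` of `{i,j,l,p}`,
of the minimal ℓ¹ distance from `J` to its complement. -/
def d3gap {d : ℕ} (i j l p : Fin d → ℤ) : ℤ :=
  max (gap2to2 i j l p) (max (gap2to2 i l j p) (gap2to2 i p j l))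

section auxLemmas
variable {d : ℕ}

lemma l1dist_comm (x y : Fin d → ℤ) : l1dist x y = l1dist y x :=
  Finset.sum_congr rfl fun j _ => abs_sub_comm _ _

lemma l1dist_triangle (x y z : Fin d → ℤ) : l1dist x z ≤ l1dist x y + l1dist y z := by
  unfold l1dist
  rw [← Finset.sum_add_distrib]
  exact Finset.sum_le_sum fun j _ => abs_sub_le _ _ _

/-- ℓ¹ ball as a `Finset`. -/
def lball (c : Fin d → ℤ) (M : ℤ) : Finset (Fin d → ℤ) :=
  Fintype.piFinset fun j => Finset.Icc (c j - M) (c j + M)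

lemma mem_lball {x c : Fin d → ℤ} {M : ℤ} (h : l1dist x c ≤ M) : x ∈ lball c M := by
  simp only [lball, Fintype.mem_piFinset, Finset.mem_Icc]
  intro j
  have h1 : |x j - c j| ≤ l1dist x c :=
    Finset.single_le_sum (f := fun j => |x j - c j|) (fun j _ => abs_nonneg _) (Finset.mem_univ j)
  have h2 := abs_le.mp (le_trans h1 h)
  omega

lemma card_lball (c : Fin d → ℤ) (M : ℤ) : (lball c M).card = ((2*M+1).toNat)^d := by
  simp only [lball, Fintype.card_piFinset, Int.card_Icc]
  have : ∀ j : Fin d, (c j + M + 1 - (c j - M)).toNat = (2*M+1).toNat := by intro j; congr 1; ring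
  rw [Finset.prod_congr rfl (fun j _ => this j), Finset.prod_const, Finset.card_univ,
    Fintype.card_fin]

/-- ℓ¹ sphere (of radius `r`, inside the ball of radius `M`) as a `Finset`. -/
def lsph (c : Fin d → ℤ) (M r : ℤ) : Finset (Fin d → ℤ) :=
  (lball c M).filter fun x => l1dist x c = r

lemma mem_lsph {x c : Fin d → ℤ} {M r : ℤ} (h1 : l1dist x c = r) (h2 : r ≤ M) :
    x ∈ lsph c M r :=
  Finset.mem_filter.mpr ⟨mem_lball (h1 ▸ h2), h1⟩

lemma card_lsph (hd : 1 ≤ d) (c : Fin d → ℤ) (M r : ℤ) :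
    (lsph c M r).card ≤ 2 * ((2*M+1).toNat)^(d-1) := by
  set la : Fin d := ⟨d-1, by omega⟩ with hla
  set T : Finset ((Fin (d-1) → ℤ) × Bool) :=
    (Fintype.piFinset fun j : Fin (d-1) =>
      Finset.Icc (c (Fin.castLE (Nat.sub_le d 1) j) - M) (c (Fin.castLE (Nat.sub_le d 1) j) + M))
      ×ˢ (Finset.univ : Finset Bool) with hT
  have hcard : T.card = ((2*M+1).toNat)^(d-1) * 2 := by
    rw [hT, Finset.card_product, Fintype.card_piFinset]
    have : ∀ j : Fin (d-1),
        (Finset.Icc (c (Fin.castLE (Nat.sub_le d 1) j) - M)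
          (c (Fin.castLE (Nat.sub_le d 1) j) + M)).card = (2*M+1).toNat := by
      intro j; rw [Int.card_Icc]; congr 1; ring
    rw [Finset.prod_congr rfl (fun j _ => this j), Finset.prod_const, Finset.card_univ,
      Fintype.card_fin, Finset.card_univ, Fintype.card_bool]
  have hle : (lsph c M r).card ≤ T.card := by
    apply Finset.card_le_card_of_injOn
      (fun x => ((fun j : Fin (d-1) => x (Fin.castLE (Nat.sub_le d 1) j)),
        decide (0 ≤ x la - c la)))
    · intro x hx
      have hxb : x ∈ lball c M := (Finset.mem_filter.mp hx).1
      rw [lball, Fintype.mem_piFinset] at hxb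
      rw [hT, Finset.mem_coe, Finset.mem_product]
      constructor
      · rw [Fintype.mem_piFinset]
        intro j
        exact hxb _
      · exact Finset.mem_univ _
    · intro x hx y hy hxy
      obtain ⟨h1, h2⟩ := Prod.mk.injEq .. ▸ hxy
      have hcoord : ∀ jj : Fin d, jj ≠ la → x jj = y jj := by
        intro jj hne
        have hlt : jj.1 < d - 1 := by
          have h3 := jj.2
          have h4 : jj.1 ≠ d - 1 := fun h => hne (Fin.ext h)
          omega
        have := congrFun h1 ⟨jj.1, hlt⟩
        have he : Fin.castLE (Nat.sub_le d 1) (⟨jj.1, hlt⟩ : Fin (d-1)) = jj := Fin.ext rfl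
        rwa [he] at this
      have hx2 : l1dist x c = r := (Finset.mem_filter.mp hx).2
      have hy2 : l1dist y c = r := (Finset.mem_filter.mp hy).2
      have hsx : ∑ j ∈ Finset.univ.erase la, |x j - c j| + |x la - c la| = r := by
        rw [Finset.sum_erase_add _ _ (Finset.mem_univ la)]; exact hx2
      have hsy : ∑ j ∈ Finset.univ.erase la, |y j - c j| + |y la - c la| = r := by
        rw [Finset.sum_erase_add _ _ (Finset.mem_univ la)]; exact hy2
      have hsum_eq : ∑ j ∈ Finset.univ.erase la, |x j - c j|
          = ∑ j ∈ Finset.univ.erase la, |y j - c j| :=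
        Finset.sum_congr rfl fun jj hjj => by rw [hcoord jj (Finset.ne_of_mem_erase hjj)]
      have habs : |x la - c la| = |y la - c la| := by omega
      have hsign : (0 ≤ x la - c la) ↔ (0 ≤ y la - c la) := by
        simpa [decide_eq_decide] using h2
      have hlast : x la = y la := by
        by_cases h0 : 0 ≤ x la - c la
        · have h0' := hsign.mp h0
          rw [abs_of_nonneg h0, abs_of_nonneg h0'] at habs; omega
        · have h0' : ¬ 0 ≤ y la - c la := fun hy' => h0 (hsign.mpr hy')
          rw [abs_of_neg (by omega), abs_of_neg (by omega)] at habs; omega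
      funext jj
      by_cases hj : jj = la
      · rw [hj]; exact hlast
      · exact hcoord jj hj
  omega

private lemma min3_eq {x y z w : ℤ} (h : min x (min y z) = w) : x = w ∨ y = w ∨ z = w := by
  rcases min_choice x (min y z) with h1 | h1
  · exact Or.inl (h1.symm.trans h)
  · rcases min_choice y z with h2 | h2
    · exact Or.inr (Or.inl ((h2.symm.trans h1.symm).trans h))
    · exact Or.inr (Or.inr ((h2.symm.trans h1.symm).trans h))

private lemma max4_eq {a b c e w : ℤ} (h : max a (max b (max c e)) = w) :
    a = w ∨ b = w ∨ c = w ∨ e = w := by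
  rcases max_choice a (max b (max c e)) with h1 | h1
  · exact Or.inl (h1.symm.trans h)
  · rcases max_choice b (max c e) with h2 | h2
    · exact Or.inr (Or.inl ((h2.symm.trans h1.symm).trans h))
    · rcases max_choice c e with h3 | h3
      · exact Or.inr (Or.inr (Or.inl (((h3.symm.trans h2.symm).trans h1.symm).trans h)))
      · exact Or.inr (Or.inr (Or.inr (((h3.symm.trans h2.symm).trans h1.symm).trans h)))

lemma exact_pair {i j l p : Fin d → ℤ} {k : ℤ} (h : d2gap i j l p = k) :
    l1dist i j = k ∨ l1dist i l = k ∨ l1dist i p = k ∨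
    l1dist j l = k ∨ l1dist j p = k ∨ l1dist l p = k := by
  unfold d2gap at h
  rcases max4_eq h with hg | hg | hg | hg <;> unfold gap1to3 at hg <;>
    rcases min3_eq hg with he | he | he
  · exact Or.inl he
  · exact Or.inr (Or.inl he)
  · exact Or.inr (Or.inr (Or.inl he))
  · exact Or.inl ((l1dist_comm i j).trans he)
  · exact Or.inr (Or.inr (Or.inr (Or.inl he)))
  · exact Or.inr (Or.inr (Or.inr (Or.inr (Or.inl he))))
  · exact Or.inr (Or.inl ((l1dist_comm i l).trans he))
  · exact Or.inr (Or.inr (Or.inr (Or.inl ((l1dist_comm j l).trans he))))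
  · exact Or.inr (Or.inr (Or.inr (Or.inr (Or.inr he))))
  · exact Or.inr (Or.inr (Or.inl ((l1dist_comm i p).trans he)))
  · exact Or.inr (Or.inr (Or.inr (Or.inr (Or.inl ((l1dist_comm j p).trans he)))))
  · exact Or.inr (Or.inr (Or.inr (Or.inr (Or.inr ((l1dist_comm l p).trans he)))))

set_option maxHeartbeats 4000000 in
lemma diam_bound {i j l p : Fin d → ℤ} {k₂ k₃ : ℤ}
    (h2 : d2gap i j l p = k₂) (h3 : d3gap i j l p = k₃) :
    l1dist j i ≤ 3*(k₂+k₃) ∧ l1dist l i ≤ 3*(k₂+k₃) ∧ l1dist p i ≤ 3*(k₂+k₃) := by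
  have ha : gap1to3 i j l p ≤ k₂ := h2 ▸ le_max_left _ _
  have hb : gap1to3 j i l p ≤ k₂ := h2 ▸ le_max_of_le_right (le_max_left _ _)
  have hc : gap1to3 l i j p ≤ k₂ :=
    h2 ▸ le_max_of_le_right (le_max_of_le_right (le_max_left _ _))
  have he : gap1to3 p i j l ≤ k₂ :=
    h2 ▸ le_max_of_le_right (le_max_of_le_right (le_max_right _ _))
  have g1 : gap2to2 i j l p ≤ k₃ := h3 ▸ le_max_left _ _
  have g2 : gap2to2 i l j p ≤ k₃ := h3 ▸ le_max_of_le_right (le_max_left _ _)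
  have g3 : gap2to2 i p j l ≤ k₃ := h3 ▸ le_max_of_le_right (le_max_right _ _)
  simp only [gap1to3, gap2to2, min_le_iff] at ha hb hc he g1 g2 g3
  have c1 := l1dist_comm j i
  have c2 := l1dist_comm l i
  have c3 := l1dist_comm p i
  have c4 := l1dist_comm l j
  have c5 := l1dist_comm p j
  have c6 := l1dist_comm p l
  have t1 := l1dist_triangle i l j
  have t2 := l1dist_triangle i p j
  have t3 := l1dist_triangle i j l
  have t4 := l1dist_triangle i p l
  have t5 := l1dist_triangle i j p
  have t6 := l1dist_triangle i l p
  have t7 := l1dist_triangle j i l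
  have t8 := l1dist_triangle j p l
  have t9 := l1dist_triangle j i p
  have t10 := l1dist_triangle j l p
  have t11 := l1dist_triangle l i p
  have t12 := l1dist_triangle l j p
  omega

end auxLemmas

/-- there is `C > 0` depending only on `d` such that for every finite
`I ⊂ ℤ^d` and all `k₂, k₃ ≥ 1`, the number of quadruples of pairwise distinct points of
`I` with `d₂ = k₂` and `d₃ = k₃` is at most `C (k₂+k₃)^{3d−1} #I`. -/
theorem quadruple_counting_bound (d : ℕ) (hd : 1 ≤ d) :
    ∃ C : ℝ, 0 < C ∧ ∀ (I : Finset (Fin d → ℤ)) (k₂ k₃ : ℕ), 1 ≤ k₂ → 1 ≤ k₃ →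
      (((I ×ˢ I ×ˢ I ×ˢ I).filter
          fun t : (Fin d → ℤ) × (Fin d → ℤ) × (Fin d → ℤ) × (Fin d → ℤ) =>
          t.1 ≠ t.2.1 ∧ t.1 ≠ t.2.2.1 ∧ t.1 ≠ t.2.2.2 ∧
          t.2.1 ≠ t.2.2.1 ∧ t.2.1 ≠ t.2.2.2 ∧ t.2.2.1 ≠ t.2.2.2 ∧
          d2gap t.1 t.2.1 t.2.2.1 t.2.2.2 = (k₂ : ℤ) ∧
          d3gap t.1 t.2.1 t.2.2.1 t.2.2.2 = (k₃ : ℤ)).card : ℝ) ≤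
        C * ((k₂ : ℝ) + (k₃ : ℝ)) ^ (3 * d - 1) * (I.card : ℝ) := by
  refine ⟨12 * 7 ^ (3 * d), by positivity, ?_⟩
  intro I k₂ k₃ hk2 hk3
  set M : ℤ := 3 * ((k₂ : ℤ) + (k₃ : ℤ)) with hM
  set b : ℕ := (2 * M + 1).toNat with hb
  have hk2M : (k₂ : ℤ) ≤ M := by rw [hM]; omega
  set U : (Fin d → ℤ) → Finset ((Fin d → ℤ) × (Fin d → ℤ) × (Fin d → ℤ)) := fun i =>
    (lsph i M (k₂:ℤ) ×ˢ lball i M ×ˢ lball i M) ∪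
    (lball i M ×ˢ lsph i M (k₂:ℤ) ×ˢ lball i M) ∪
    (lball i M ×ˢ lball i M ×ˢ lsph i M (k₂:ℤ)) ∪
    (lball i M).biUnion (fun x => {x} ×ˢ lsph x M (k₂:ℤ) ×ˢ lball i M) ∪
    (lball i M).biUnion (fun x => {x} ×ˢ lball i M ×ˢ lsph x M (k₂:ℤ)) ∪
    (lball i M).biUnion (fun x => lball i M ×ˢ {x} ×ˢ lsph x M (k₂:ℤ)) with hU
  have hsub : ((I ×ˢ I ×ˢ I ×ˢ I).filter
      fun t : (Fin d → ℤ) × (Fin d → ℤ) × (Fin d → ℤ) × (Fin d → ℤ) =>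
      t.1 ≠ t.2.1 ∧ t.1 ≠ t.2.2.1 ∧ t.1 ≠ t.2.2.2 ∧
      t.2.1 ≠ t.2.2.1 ∧ t.2.1 ≠ t.2.2.2 ∧ t.2.2.1 ≠ t.2.2.2 ∧
      d2gap t.1 t.2.1 t.2.2.1 t.2.2.2 = (k₂ : ℤ) ∧
      d3gap t.1 t.2.1 t.2.2.1 t.2.2.2 = (k₃ : ℤ))
      ⊆ I.biUnion (fun i => {i} ×ˢ U i) := by
    intro t ht
    rw [Finset.mem_filter] at ht
    obtain ⟨hmem, h12, h13, h14, h23, h24, h34, h2, h3⟩ := ht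
    rw [Finset.mem_product] at hmem
    obtain ⟨hd1, -⟩ := hmem
    obtain ⟨dj, dl, dp⟩ := diam_bound h2 h3
    have hj : t.2.1 ∈ lball t.1 M := mem_lball (le_of_le_of_eq dj hM.symm)
    have hl : t.2.2.1 ∈ lball t.1 M := mem_lball (le_of_le_of_eq dl hM.symm)
    have hp : t.2.2.2 ∈ lball t.1 M := mem_lball (le_of_le_of_eq dp hM.symm)
    rw [Finset.mem_biUnion]
    refine ⟨t.1, hd1, ?_⟩
    rw [Finset.mem_product]
    refine ⟨Finset.mem_singleton_self _, ?_⟩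
    rcases exact_pair h2 with hpr | hpr | hpr | hpr | hpr | hpr
    · exact Finset.mem_union_left _ (Finset.mem_union_left _ (Finset.mem_union_left _
        (Finset.mem_union_left _ (Finset.mem_union_left _ (Finset.mem_product.mpr
          ⟨mem_lsph ((l1dist_comm _ _).trans hpr) hk2M,
           Finset.mem_product.mpr ⟨hl, hp⟩⟩)))))
    · exact Finset.mem_union_left _ (Finset.mem_union_left _ (Finset.mem_union_left _
        (Finset.mem_union_left _ (Finset.mem_union_right _ (Finset.mem_product.mpr
          ⟨hj, Finset.mem_product.mpr
            ⟨mem_lsph ((l1dist_comm _ _).trans hpr) hk2M, hp⟩⟩)))))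
    · exact Finset.mem_union_left _ (Finset.mem_union_left _ (Finset.mem_union_left _
        (Finset.mem_union_right _ (Finset.mem_product.mpr
          ⟨hj, Finset.mem_product.mpr
            ⟨hl, mem_lsph ((l1dist_comm _ _).trans hpr) hk2M⟩⟩))))
    · refine Finset.mem_union_left _ (Finset.mem_union_left _ (Finset.mem_union_right _ ?_))
      rw [Finset.mem_biUnion]
      exact ⟨t.2.1, hj, Finset.mem_product.mpr ⟨Finset.mem_singleton_self _,
        Finset.mem_product.mpr ⟨mem_lsph ((l1dist_comm _ _).trans hpr) hk2M, hp⟩⟩⟩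
    · refine Finset.mem_union_left _ (Finset.mem_union_right _ ?_)
      rw [Finset.mem_biUnion]
      exact ⟨t.2.1, hj, Finset.mem_product.mpr ⟨Finset.mem_singleton_self _,
        Finset.mem_product.mpr ⟨hl, mem_lsph ((l1dist_comm _ _).trans hpr) hk2M⟩⟩⟩
    · refine Finset.mem_union_right _ ?_
      rw [Finset.mem_biUnion]
      exact ⟨t.2.2.1, hl, Finset.mem_product.mpr ⟨hj, Finset.mem_product.mpr
        ⟨Finset.mem_singleton_self _, mem_lsph ((l1dist_comm _ _).trans hpr) hk2M⟩⟩⟩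
  have hball : ∀ c : Fin d → ℤ, (lball c M).card = b ^ d := fun c => by
    rw [card_lball, hb]
  have hsph : ∀ c : Fin d → ℤ, (lsph c M (k₂:ℤ)).card ≤ 2 * b ^ (d-1) := fun c => by
    rw [hb]; exact card_lsph hd c M _
  have hpow : 2 * (b ^ (d-1) * (b ^ d * b ^ d)) = 2 * b ^ (3*d-1) := by
    rw [← pow_add, ← pow_add]
    congr 2
    omega
  have hUcard : ∀ i : Fin d → ℤ, (U i).card ≤ 12 * b ^ (3*d-1) := by
    intro i
    have hA : (lsph i M (k₂:ℤ) ×ˢ lball i M ×ˢ lball i M).card ≤ 2 * b ^ (3*d-1) := by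
      rw [Finset.card_product, Finset.card_product, hball, ← hpow]
      calc (lsph i M (k₂:ℤ)).card * (b^d * b^d) ≤ (2*b^(d-1)) * (b^d*b^d) :=
            Nat.mul_le_mul_right _ (hsph i)
        _ = 2 * (b^(d-1) * (b^d * b^d)) := by ring
    have hB : (lball i M ×ˢ lsph i M (k₂:ℤ) ×ˢ lball i M).card ≤ 2 * b ^ (3*d-1) := by
      rw [Finset.card_product, Finset.card_product, hball, ← hpow]
      calc b^d * ((lsph i M (k₂:ℤ)).card * b^d) ≤ b^d * ((2*b^(d-1)) * b^d) :=
            Nat.mul_le_mul_left _ (Nat.mul_le_mul_right _ (hsph i))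
        _ = 2 * (b^(d-1) * (b^d * b^d)) := by ring
    have hC : (lball i M ×ˢ lball i M ×ˢ lsph i M (k₂:ℤ)).card ≤ 2 * b ^ (3*d-1) := by
      rw [Finset.card_product, Finset.card_product, hball, ← hpow]
      calc b^d * (b^d * (lsph i M (k₂:ℤ)).card) ≤ b^d * (b^d * (2*b^(d-1))) :=
            Nat.mul_le_mul_left _ (Nat.mul_le_mul_left _ (hsph i))
        _ = 2 * (b^(d-1) * (b^d * b^d)) := by ring
    have hD : ((lball i M).biUnion
        (fun x => {x} ×ˢ lsph x M (k₂:ℤ) ×ˢ lball i M)).card ≤ 2 * b ^ (3*d-1) := by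
      refine le_trans (Finset.card_biUnion_le) ?_
      refine le_trans (Finset.sum_le_card_nsmul _ _ (2 * b^(d-1) * b^d) ?_) ?_
      · intro x hx
        rw [Finset.card_product, Finset.card_product, Finset.card_singleton, one_mul, hball]
        exact Nat.mul_le_mul_right _ (hsph x)
      · rw [smul_eq_mul, hball, ← hpow]; ring_nf; omega
    have hE : ((lball i M).biUnion
        (fun x => {x} ×ˢ lball i M ×ˢ lsph x M (k₂:ℤ))).card ≤ 2 * b ^ (3*d-1) := by
      refine le_trans (Finset.card_biUnion_le) ?_
      refine le_trans (Finset.sum_le_card_nsmul _ _ (b^d * (2 * b^(d-1))) ?_) ?_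
      · intro x hx
        rw [Finset.card_product, Finset.card_product, Finset.card_singleton, one_mul, hball]
        exact Nat.mul_le_mul_left _ (hsph x)
      · rw [smul_eq_mul, hball, ← hpow]; ring_nf; omega
    have hF : ((lball i M).biUnion
        (fun x => lball i M ×ˢ {x} ×ˢ lsph x M (k₂:ℤ))).card ≤ 2 * b ^ (3*d-1) := by
      refine le_trans (Finset.card_biUnion_le) ?_
      refine le_trans (Finset.sum_le_card_nsmul _ _ (b^d * (2 * b^(d-1))) ?_) ?_
      · intro x hx
        rw [Finset.card_product, Finset.card_product, Finset.card_singleton, one_mul, hball]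
        exact Nat.mul_le_mul_left _ (hsph x)
      · rw [smul_eq_mul, hball, ← hpow]; ring_nf; omega
    calc (U i).card
        ≤ ((lsph i M (k₂:ℤ) ×ˢ lball i M ×ˢ lball i M) ∪
           (lball i M ×ˢ lsph i M (k₂:ℤ) ×ˢ lball i M) ∪
           (lball i M ×ˢ lball i M ×ˢ lsph i M (k₂:ℤ)) ∪
           (lball i M).biUnion (fun x => {x} ×ˢ lsph x M (k₂:ℤ) ×ˢ lball i M) ∪
           (lball i M).biUnion (fun x => {x} ×ˢ lball i M ×ˢ lsph x M (k₂:ℤ))).card +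
          ((lball i M).biUnion (fun x => lball i M ×ˢ {x} ×ˢ lsph x M (k₂:ℤ))).card := by
            rw [hU]; exact Finset.card_union_le _ _
      _ ≤ (((lsph i M (k₂:ℤ) ×ˢ lball i M ×ˢ lball i M) ∪
           (lball i M ×ˢ lsph i M (k₂:ℤ) ×ˢ lball i M) ∪
           (lball i M ×ˢ lball i M ×ˢ lsph i M (k₂:ℤ)) ∪
           (lball i M).biUnion (fun x => {x} ×ˢ lsph x M (k₂:ℤ) ×ˢ lball i M)).card +
          ((lball i M).biUnion (fun x => {x} ×ˢ lball i M ×ˢ lsph x M (k₂:ℤ))).card) +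
          ((lball i M).biUnion (fun x => lball i M ×ˢ {x} ×ˢ lsph x M (k₂:ℤ))).card :=
            Nat.add_le_add_right (Finset.card_union_le _ _) _
      _ ≤ ((((lsph i M (k₂:ℤ) ×ˢ lball i M ×ˢ lball i M) ∪
           (lball i M ×ˢ lsph i M (k₂:ℤ) ×ˢ lball i M) ∪
           (lball i M ×ˢ lball i M ×ˢ lsph i M (k₂:ℤ))).card +
          ((lball i M).biUnion (fun x => {x} ×ˢ lsph x M (k₂:ℤ) ×ˢ lball i M)).card) +
          ((lball i M).biUnion (fun x => {x} ×ˢ lball i M ×ˢ lsph x M (k₂:ℤ))).card) +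
          ((lball i M).biUnion (fun x => lball i M ×ˢ {x} ×ˢ lsph x M (k₂:ℤ))).card :=
            Nat.add_le_add_right (Nat.add_le_add_right (Finset.card_union_le _ _) _) _
      _ ≤ (((((lsph i M (k₂:ℤ) ×ˢ lball i M ×ˢ lball i M) ∪
           (lball i M ×ˢ lsph i M (k₂:ℤ) ×ˢ lball i M)).card +
           (lball i M ×ˢ lball i M ×ˢ lsph i M (k₂:ℤ)).card) +
          ((lball i M).biUnion (fun x => {x} ×ˢ lsph x M (k₂:ℤ) ×ˢ lball i M)).card) +
          ((lball i M).biUnion (fun x => {x} ×ˢ lball i M ×ˢ lsph x M (k₂:ℤ))).card) +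
          ((lball i M).biUnion (fun x => lball i M ×ˢ {x} ×ˢ lsph x M (k₂:ℤ))).card :=
            Nat.add_le_add_right (Nat.add_le_add_right
              (Nat.add_le_add_right (Finset.card_union_le _ _) _) _) _
      _ ≤ ((((((lsph i M (k₂:ℤ) ×ˢ lball i M ×ˢ lball i M).card +
           (lball i M ×ˢ lsph i M (k₂:ℤ) ×ˢ lball i M).card) +
           (lball i M ×ˢ lball i M ×ˢ lsph i M (k₂:ℤ)).card) +
          ((lball i M).biUnion (fun x => {x} ×ˢ lsph x M (k₂:ℤ) ×ˢ lball i M)).card) +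
          ((lball i M).biUnion (fun x => {x} ×ˢ lball i M ×ˢ lsph x M (k₂:ℤ))).card) +
          ((lball i M).biUnion (fun x => lball i M ×ˢ {x} ×ˢ lsph x M (k₂:ℤ))).card) :=
            Nat.add_le_add_right (Nat.add_le_add_right (Nat.add_le_add_right
              (Nat.add_le_add_right (Finset.card_union_le _ _) _) _) _) _
      _ ≤ 2 * b ^ (3*d-1) + 2 * b ^ (3*d-1) + 2 * b ^ (3*d-1) + 2 * b ^ (3*d-1) +
          2 * b ^ (3*d-1) + 2 * b ^ (3*d-1) := by
            exact add_le_add (add_le_add (add_le_add (add_le_add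
              (add_le_add hA hB) hC) hD) hE) hF
      _ = 12 * b ^ (3*d-1) := by ring
  have hnat : ((I ×ˢ I ×ˢ I ×ˢ I).filter
      fun t : (Fin d → ℤ) × (Fin d → ℤ) × (Fin d → ℤ) × (Fin d → ℤ) =>
      t.1 ≠ t.2.1 ∧ t.1 ≠ t.2.2.1 ∧ t.1 ≠ t.2.2.2 ∧
      t.2.1 ≠ t.2.2.1 ∧ t.2.1 ≠ t.2.2.2 ∧ t.2.2.1 ≠ t.2.2.2 ∧
      d2gap t.1 t.2.1 t.2.2.1 t.2.2.2 = (k₂ : ℤ) ∧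
      d3gap t.1 t.2.1 t.2.2.1 t.2.2.2 = (k₃ : ℤ)).card
      ≤ 12 * 7 ^ (3*d) * (k₂ + k₃) ^ (3*d-1) * I.card := by
    have h1 : (I.biUnion (fun i => {i} ×ˢ U i)).card ≤ I.card * (12 * b ^ (3*d-1)) := by
      refine le_trans Finset.card_biUnion_le ?_
      refine le_trans (Finset.sum_le_card_nsmul _ _ (12 * b ^ (3*d-1)) ?_) ?_
      · intro i hi
        rw [Finset.card_product, Finset.card_singleton, one_mul]
        exact hUcard i
      · rw [smul_eq_mul]
    have hbK : b ≤ 7 * (k₂ + k₃) := by rw [hb, hM]; omega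
    have h2 : b ^ (3*d-1) ≤ 7 ^ (3*d) * (k₂ + k₃) ^ (3*d-1) :=
      calc b ^ (3*d-1) ≤ (7 * (k₂ + k₃)) ^ (3*d-1) := Nat.pow_le_pow_left hbK _
        _ = 7 ^ (3*d-1) * (k₂ + k₃) ^ (3*d-1) := mul_pow _ _ _
        _ ≤ 7 ^ (3*d) * (k₂ + k₃) ^ (3*d-1) :=
            Nat.mul_le_mul_right _ (Nat.pow_le_pow_right (by norm_num) (Nat.sub_le _ _))
    calc _ ≤ (I.biUnion (fun i => {i} ×ˢ U i)).card := Finset.card_le_card hsub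
      _ ≤ I.card * (12 * b ^ (3*d-1)) := h1
      _ ≤ I.card * (12 * (7 ^ (3*d) * (k₂ + k₃) ^ (3*d-1))) :=
          Nat.mul_le_mul_left _ (Nat.mul_le_mul_left _ h2)
      _ = 12 * 7 ^ (3*d) * (k₂ + k₃) ^ (3*d-1) * I.card := by ring
  have hcast : ((k₂:ℝ) + (k₃:ℝ)) = ((k₂ + k₃ : ℕ) : ℝ) := by push_cast; ring
  rw [hcast]
  exact_mod_cast hnat
end
end

section
/- Under the stochastic sampling design and kernel conditions, assume g is continuous at 0, h_j → 0 for each j, and n·h_1⋯h_d → ∞. Then the kernel density estimator ĝ(0) := (n h_1⋯h_d)^{−1}·Σ_{i=1}^n K_{Ah}(X_i) converges in probability to g(0) as n → ∞. -/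
set_option autoImplicit false

open MeasureTheory ProbabilityTheory Filter Topology
open scoped ENNReal NNReal

noncomputable section

lemma map_div_volume {d : ℕ} (c : Fin d → ℝ) (hc : ∀ j, 0 < c j) :
    Measure.map (fun x : Fin d → ℝ => fun j => x j / c j) volume
      = ENNReal.ofReal (∏ j, c j) • volume := by
  have hfun : (fun x : Fin d → ℝ => fun j => x j / c j)
      = ⇑(Matrix.toLin' (Matrix.diagonal fun j => (c j)⁻¹)) := by
    funext x j
    simp [Matrix.toLin'_apply, Matrix.mulVec_diagonal, div_eq_inv_mul]
  have hdet : LinearMap.det (Matrix.toLin' (Matrix.diagonal fun j => (c j)⁻¹))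
      = ∏ j, (c j)⁻¹ := by
    rw [LinearMap.det_toLin', Matrix.det_diagonal]
  have hne : LinearMap.det (Matrix.toLin' (Matrix.diagonal fun j => (c j)⁻¹)) ≠ 0 := by
    rw [hdet]
    exact (Finset.prod_pos fun j _ => inv_pos.2 (hc j)).ne'
  rw [hfun, Real.map_linearMap_volume_pi_eq_smul_volume_pi hne, hdet]
  congr 1
  rw [abs_of_pos]
  · rw [Finset.prod_inv_distrib, inv_inv]
  · exact inv_pos.2 (Finset.prod_pos fun j _ => inv_pos.2 (hc j))

lemma integral_comp_div {d : ℕ} (c : Fin d → ℝ) (hc : ∀ j, 0 < c j)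
    {ψ : (Fin d → ℝ) → ℝ} (hψ : Measurable ψ) :
    ∫ x : Fin d → ℝ, ψ (fun j => x j / c j) = (∏ j, c j) * ∫ z, ψ z := by
  have hS : Measurable fun x : Fin d → ℝ => fun j => x j / c j :=
    measurable_pi_lambda _ fun j => (measurable_pi_apply j).div_const _
  rw [← MeasureTheory.integral_map hS.aemeasurable hψ.aestronglyMeasurable,
    map_div_volume c hc, integral_smul_measure,
    ENNReal.toReal_ofReal (Finset.prod_nonneg fun j _ => (hc j).le), smul_eq_mul]

lemma integral_withDensity_ofReal {d : ℕ} {f : (Fin d → ℝ) → ℝ} (hf : Measurable f)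
    (hf0 : ∀ x, 0 ≤ f x) (φ : (Fin d → ℝ) → ℝ) :
    ∫ x, φ x ∂(volume.withDensity fun x => ENNReal.ofReal (f x))
      = ∫ x, f x * φ x := by
  have h1 : (fun x => ENNReal.ofReal (f x))
      = fun x => (((fun y => (f y).toNNReal) x : ℝ≥0) : ℝ≥0∞) := rfl
  rw [h1, integral_withDensity_eq_integral_smul hf.real_toNNReal]
  congr 1; funext x
  simp [NNReal.smul_def, Real.coe_toNNReal _ (hf0 x)]

lemma moment_calc {d : ℕ} {Ω : Type*} [MeasurableSpace Ω] (P : Measure Ω)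
    (A h : Fin d → ℝ) (hA : ∀ j, 0 < A j) (hh : ∀ j, 0 < h j)
    (Xi : Ω → Fin d → ℝ) (hXi : Measurable Xi)
    (g : (Fin d → ℝ) → ℝ) (hg : Measurable g) (hg0 : ∀ x, 0 ≤ g x)
    (hX : Measure.map Xi P = volume.withDensity (fun x =>
        ENNReal.ofReal ((∏ j, A j)⁻¹ * g (scaled A x))))
    (φ : (Fin d → ℝ) → ℝ) (hφ : Measurable φ) :
    ∫ ω, φ (fun j => Xi ω j / (A j * h j)) ∂P
      = (∏ j, h j) * ∫ z, g (fun j => h j * z j) * φ z := by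
  have hS : Measurable fun x : Fin d → ℝ => fun j => x j / (A j * h j) :=
    measurable_pi_lambda _ fun j => (measurable_pi_apply j).div_const _
  have hscaled : Measurable fun x : Fin d → ℝ => scaled A x :=
    measurable_pi_lambda _ fun j => (measurable_pi_apply j).div_const _
  have hfm : Measurable fun x : Fin d → ℝ => (∏ j, A j)⁻¹ * g (scaled A x) :=
    (hg.comp hscaled).const_mul _
  have hf0 : ∀ x : Fin d → ℝ, 0 ≤ (∏ j, A j)⁻¹ * g (scaled A x) := fun x =>
    mul_nonneg (inv_nonneg.2 (Finset.prod_nonneg fun j _ => (hA j).le)) (hg0 _)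
  have h1 : ∫ ω, φ (fun j => Xi ω j / (A j * h j)) ∂P
      = ∫ x, φ (fun j => x j / (A j * h j)) ∂(Measure.map Xi P) :=
    (MeasureTheory.integral_map hXi.aemeasurable
      (hφ.comp hS).aestronglyMeasurable).symm
  rw [h1, hX, integral_withDensity_ofReal hfm hf0]
  have key : (fun x : Fin d → ℝ =>
        ((∏ j, A j)⁻¹ * g (scaled A x)) * φ (fun j => x j / (A j * h j)))
      = fun x => (fun z => (∏ j, A j)⁻¹ * (g (fun j => h j * z j) * φ z))
          (fun j => x j / (A j * h j)) := by
    funext x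
    have : scaled A x = fun j => h j * (x j / (A j * h j)) := by
      funext j
      have hAj := (hA j).ne'
      have hhj := (hh j).ne'
      simp only [scaled]
      rw [mul_div_assoc', mul_comm (A j) (h j), mul_div_mul_left _ _ hhj]
    rw [this]; ring
  have hψm : Measurable fun z : Fin d → ℝ =>
      (∏ j, A j)⁻¹ * (g (fun j => h j * z j) * φ z) :=
    ((hg.comp (measurable_pi_lambda _ fun j =>
      (measurable_pi_apply j).const_mul _)).mul hφ).const_mul _
  rw [key, integral_comp_div (fun j => A j * h j) (fun j => mul_pos (hA j) (hh j)) hψm,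
    MeasureTheory.integral_const_mul, Finset.prod_mul_distrib]
  have hAprod : (0:ℝ) < ∏ j, A j := Finset.prod_pos fun j _ => hA j
  field_simp

lemma bias_tendsto {d : ℕ} (h : ℕ → Fin d → ℝ)
    (hh0 : ∀ j, Tendsto (fun n => h n j) atTop (𝓝 0))
    (g K : (Fin d → ℝ) → ℝ) (hgmeas : Measurable g) (Cg : ℝ) (hgbd : ∀ x, |g x| ≤ Cg)
    (hgcont : ContinuousAt g 0)
    (hKmeas : Measurable K) (CK : ℝ) (hKbd : ∀ z, |K z| ≤ CK)
    (hKsupp : ∀ z, z ∉ R0 d → K z = 0)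
    (hKint : ∫ z : Fin d → ℝ, K z = 1) :
    Tendsto (fun n => ∫ z, g (fun j => h n j * z j) * K z) atTop (𝓝 (g 0)) := by
  have hmeasb : MeasurableSet (R0 d) := measurableSet_Icc
  have hbound_int : Integrable ((R0 d).indicator fun _ => Cg * CK) := by
    rw [integrable_indicator_iff hmeasb]
    exact integrableOn_const isCompact_Icc.measure_lt_top.ne
  have hFmeas : ∀ n : ℕ, AEStronglyMeasurable
      (fun z : Fin d → ℝ => g (fun j => h n j * z j) * K z) volume := fun n =>
    ((hgmeas.comp (measurable_pi_lambda _ fun j =>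
      (measurable_pi_apply j).const_mul _)).mul hKmeas).aestronglyMeasurable
  have hlim : Tendsto (fun n => ∫ z, g (fun j => h n j * z j) * K z) atTop
      (𝓝 (∫ z, g 0 * K z)) := by
    refine tendsto_integral_of_dominated_convergence _ hFmeas hbound_int ?_ ?_
    · intro n
      filter_upwards with z
      by_cases hz : z ∈ R0 d
      · rw [Set.indicator_of_mem hz, Real.norm_eq_abs, abs_mul]
        exact mul_le_mul (hgbd _) (hKbd _) (abs_nonneg _) ((abs_nonneg (g 0)).trans (hgbd 0))
      · rw [Set.indicator_of_notMem hz, hKsupp z hz, mul_zero, norm_zero]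
    · filter_upwards with z
      have h0 : Tendsto (fun n => (fun j => h n j * z j)) atTop (𝓝 (0 : Fin d → ℝ)) := by
        rw [tendsto_pi_nhds]
        intro j
        simpa using (hh0 j).mul_const (z j)
      exact (hgcont.tendsto.comp h0).mul_const (K z)
  have hval : ∫ z, g 0 * K z = g 0 := by
    rw [MeasureTheory.integral_const_mul, hKint, mul_one]
  rwa [hval] at hlim

lemma second_moment_bound {d : ℕ} (w : Fin d → ℝ)
    (g K : (Fin d → ℝ) → ℝ) (Cg : ℝ) (hgbd : ∀ x, |g x| ≤ Cg)
    (hgnonneg : ∀ x, 0 ≤ g x) (CK : ℝ) (hKbd : ∀ z, |K z| ≤ CK)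
    (hKsupp : ∀ z, z ∉ R0 d → K z = 0) :
    ∫ z, g (fun j => w j * z j) * (K z)^2 ≤ Cg * CK^2 := by
  have hCg : 0 ≤ Cg := (abs_nonneg _).trans (hgbd 0)
  have hmeasb : MeasurableSet (R0 d) := measurableSet_Icc
  have hBint : Integrable ((R0 d).indicator fun _ => Cg * CK^2) := by
    rw [integrable_indicator_iff hmeasb]
    exact integrableOn_const isCompact_Icc.measure_lt_top.ne
  have h1 : ∫ z, g (fun j => w j * z j) * (K z)^2
      ≤ ∫ z, (R0 d).indicator (fun _ => Cg * CK^2) z := by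
    refine integral_mono_of_nonneg ?_ hBint ?_
    · filter_upwards with z
      exact mul_nonneg (hgnonneg _) (sq_nonneg _)
    · filter_upwards with z
      by_cases hz : z ∈ R0 d
      · rw [Set.indicator_of_mem hz]
        have h2 : (K z)^2 ≤ CK^2 := by
          rw [← sq_abs]
          exact pow_le_pow_left₀ (abs_nonneg _) (hKbd z) 2
        have h3 : g (fun j => w j * z j) ≤ Cg := (le_abs_self _).trans (hgbd _)
        exact mul_le_mul h3 h2 (sq_nonneg _) hCg
      · rw [Set.indicator_of_notMem hz, hKsupp z hz]
        simp
  refine h1.trans ?_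
  rw [integral_indicator_const _ hmeasb, smul_eq_mul]
  have hv : volume (R0 d) = 1 := by
    rw [R0, Real.volume_Icc_pi]
    norm_num
  rw [measureReal_def, hv]
  simp

/-- under the stochastic sampling design (i.i.d. sites with density
`A_n^{−1} g(·/A_n)`, `g` bounded measurable supported on `R₀`, continuous at 0) and
kernel conditions (`K` bounded measurable supported in `[−1/2,1/2]^d`, `∫K = 1`),
if `h_j → 0` and `n h₁⋯h_d → ∞`, the kernel density estimator
`ĝ(0) = (n h₁⋯h_d)^{−1} Σᵢ K_{Ah}(Xᵢ)` converges in probability to `g(0)`. -/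
theorem kernel_density_estimator_consistent
    {Ω : Type*} [MeasurableSpace Ω] (P : Measure Ω) [IsProbabilityMeasure P]
    (d : ℕ) (hd : 1 ≤ d)
    (A h : ℕ → Fin d → ℝ)
    (hApos : ∀ n j, 0 < A n j) (hhpos : ∀ n j, 0 < h n j)
    (hAinf : ∀ j, Tendsto (fun n => A n j) atTop atTop)
    (hh0 : ∀ j, Tendsto (fun n => h n j) atTop (𝓝 0))
    (hnh : Tendsto (fun n : ℕ => (n : ℝ) * ∏ j, h n j) atTop atTop)
    (X : ℕ → ℕ → Ω → (Fin d → ℝ))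
    (hXmeas : ∀ n i, Measurable (X n i))
    (g : (Fin d → ℝ) → ℝ)
    (hgmeas : Measurable g) (Cg : ℝ) (hgbd : ∀ x, |g x| ≤ Cg)
    (hgnonneg : ∀ x, 0 ≤ g x)
    (hgsupp : ∀ x, x ∉ R0 d → g x = 0)
    (hgint : ∫ x : Fin d → ℝ, g x = 1)
    (hgcont : ContinuousAt g 0)
    (hXdens : ∀ n i, i < n → Measure.map (X n i) P =
      volume.withDensity (fun x =>
        ENNReal.ofReal ((∏ j, A n j)⁻¹ * g (scaled (A n) x))))
    (hXindep : ∀ n, iIndepFun (fun i : Fin n => X n i) P)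
    (K : (Fin d → ℝ) → ℝ)
    (hKmeas : Measurable K) (CK : ℝ) (hKbd : ∀ z, |K z| ≤ CK)
    (hKsupp : ∀ z, z ∉ R0 d → K z = 0)
    (hKint : ∫ z : Fin d → ℝ, K z = 1) :
    ∀ δ : ℝ, 0 < δ →
      Tendsto (fun n : ℕ =>
          (P {ω | δ < |(1 / ((n : ℝ) * ∏ j, h n j)) *
              (∑ i ∈ Finset.range n, KAh K (A n) (h n) (X n i ω)) - g 0|}).toReal)
        atTop (𝓝 0) := by
  intro δ hδ
  have hCg : 0 ≤ Cg := (abs_nonneg (g 0)).trans (hgbd 0)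
  have hCK : 0 ≤ CK := (abs_nonneg (K 0)).trans (hKbd 0)
  set Hn : ℕ → ℝ := fun n => ∏ j, h n j with hHn
  have hHpos : ∀ n, 0 < Hn n := fun n => Finset.prod_pos fun j _ => hhpos n j
  set I : ℕ → ℝ := fun n => ∫ z, g (fun j => h n j * z j) * K z with hI
  set Y : ℕ → ℕ → Ω → ℝ := fun n i ω => KAh K (A n) (h n) (X n i ω) with hYdef
  set G : ℕ → Ω → ℝ :=
    fun n ω => (1 / ((n : ℝ) * Hn n)) * ∑ i ∈ Finset.range n, Y n i ω with hGdef
  -- measurability and Memℒp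
  have hSmeas : ∀ n, Measurable fun x : Fin d → ℝ => (fun j => x j / (A n j * h n j)) :=
    fun n => measurable_pi_lambda _ fun j => (measurable_pi_apply j).div_const _
  have hKAhmeas : ∀ n, Measurable fun x : Fin d → ℝ => KAh K (A n) (h n) x := fun n =>
    hKmeas.comp (hSmeas n)
  have hYmeas : ∀ n i, Measurable (Y n i) := fun n i => (hKAhmeas n).comp (hXmeas n i)
  have hYmem : ∀ n i, MemLp (Y n i) 2 P := fun n i =>
    MemLp.of_bound (hYmeas n i).aestronglyMeasurable CK
      (ae_of_all _ fun ω => by rw [Real.norm_eq_abs]; exact hKbd _)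
  -- first moment
  have hmean : ∀ n i, i < n → ∫ ω, Y n i ω ∂P = Hn n * I n := by
    intro n i hi
    have h1 := moment_calc P (A n) (h n) (hApos n) (hhpos n) (X n i) (hXmeas n i) g hgmeas
      hgnonneg (hXdens n i hi) K hKmeas
    simpa [hYdef, KAh] using h1
  -- second moment
  have hsq : ∀ n i, i < n → ∫ ω, (Y n i ω)^2 ∂P ≤ Hn n * (Cg * CK^2) := by
    intro n i hi
    have h1 := moment_calc P (A n) (h n) (hApos n) (hhpos n) (X n i) (hXmeas n i) g hgmeas
      hgnonneg (hXdens n i hi) (fun z => (K z)^2) (hKmeas.pow_const 2)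
    have h2 : ∫ ω, (Y n i ω)^2 ∂P = Hn n * ∫ z, g (fun j => h n j * z j) * (K z)^2 := by
      simpa [hYdef, KAh] using h1
    rw [h2]
    exact mul_le_mul_of_nonneg_left
      (second_moment_bound (h n) g K Cg hgbd hgnonneg CK hKbd hKsupp) (hHpos n).le
  -- expectation of estimator
  have hGmean : ∀ n : ℕ, 1 ≤ n → ∫ ω, G n ω ∂P = I n := by
    intro n hn
    have hn0 : ((n : ℝ)) ≠ 0 := Nat.cast_ne_zero.2 (by omega)
    have hH0 : Hn n ≠ 0 := (hHpos n).ne'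
    have hint : ∀ i ∈ Finset.range n, Integrable (Y n i) P :=
      fun i _ => (hYmem n i).integrable one_le_two
    have h1 : ∫ ω, G n ω ∂P
        = (1 / ((n : ℝ) * Hn n)) * ∫ ω, ∑ i ∈ Finset.range n, Y n i ω ∂P := by
      rw [hGdef]
      exact MeasureTheory.integral_const_mul _ _
    rw [h1, MeasureTheory.integral_finset_sum _ hint]
    rw [Finset.sum_congr rfl fun i hi => hmean n i (Finset.mem_range.1 hi),
      Finset.sum_const, Finset.card_range, nsmul_eq_mul]
    field_simp
  -- variance of estimator
  have hGvar : ∀ n : ℕ, 1 ≤ n → variance (G n) P ≤ (Cg * CK^2) / ((n : ℝ) * Hn n) := by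
    intro n hn
    have hn0 : ((n : ℝ)) ≠ 0 := Nat.cast_ne_zero.2 (by omega)
    have hH0 : Hn n ≠ 0 := (hHpos n).ne'
    have hGsmul : G n = fun ω => (1 / ((n : ℝ) * Hn n)) * (∑ i ∈ Finset.range n, Y n i) ω := by
      funext ω
      simp [hGdef, Finset.sum_apply]
    have hpair : Set.Pairwise ↑(Finset.range n) fun i j => IndepFun (Y n i) (Y n j) P := by
      intro i hi j hj hij
      have hi' : i < n := Finset.mem_range.1 hi
      have hj' : j < n := Finset.mem_range.1 hj
      have hind : IndepFun (X n i) (X n j) P :=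
        (hXindep n).indepFun (i := ⟨i, hi'⟩) (j := ⟨j, hj'⟩)
          (by simpa [Fin.ext_iff] using hij)
      exact hind.comp (hKAhmeas n) (hKAhmeas n)
    have hvs : variance (∑ i ∈ Finset.range n, Y n i) P
        = ∑ i ∈ Finset.range n, variance (Y n i) P :=
      IndepFun.variance_sum (fun i _ => hYmem n i) hpair
    have hvarY : ∀ i ∈ Finset.range n, variance (Y n i) P ≤ Hn n * (Cg * CK^2) := by
      intro i hi
      refine (variance_le_expectation_sq (hYmeas n i).aestronglyMeasurable).trans ?_
      have h3 : (∫ ω, ((Y n i) ^ 2) ω ∂P) = ∫ ω, (Y n i ω)^2 ∂P := by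
        simp [Pi.pow_apply]
      rw [h3]
      exact hsq n i (Finset.mem_range.1 hi)
    have hsum : variance (∑ i ∈ Finset.range n, Y n i) P ≤ (n : ℝ) * (Hn n * (Cg * CK^2)) := by
      rw [hvs]
      calc ∑ i ∈ Finset.range n, variance (Y n i) P
          ≤ ∑ _i ∈ Finset.range n, Hn n * (Cg * CK^2) := Finset.sum_le_sum hvarY
        _ = (n : ℝ) * (Hn n * (Cg * CK^2)) := by
            rw [Finset.sum_const, Finset.card_range, nsmul_eq_mul]
    calc variance (G n) P
        = (1 / ((n : ℝ) * Hn n))^2 * variance (∑ i ∈ Finset.range n, Y n i) P := by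
          rw [hGsmul]
          exact variance_const_mul _ _ _
      _ ≤ (1 / ((n : ℝ) * Hn n))^2 * ((n : ℝ) * (Hn n * (Cg * CK^2))) := by
          exact mul_le_mul_of_nonneg_left hsum (sq_nonneg _)
      _ = (Cg * CK^2) / ((n : ℝ) * Hn n) := by
          field_simp
  -- bias
  have hbias := bias_tendsto h hh0 g K hgmeas Cg hgbd hgcont hKmeas CK hKbd hKsupp hKint
  have hev1 : ∀ᶠ n in atTop, |I n - g 0| < δ / 2 := by
    have hmem : Metric.ball (g 0) (δ / 2) ∈ 𝓝 (g 0) :=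
      Metric.ball_mem_nhds _ (by positivity)
    filter_upwards [hbias hmem] with n hn
    simpa [Real.dist_eq] using hn
  -- main estimate
  have hmain : ∀ᶠ n in atTop,
      (P {ω | δ < |G n ω - g 0|}).toReal
        ≤ (Cg * CK^2 / (δ / 2)^2) * (1 / ((n : ℝ) * Hn n)) := by
    filter_upwards [hev1, eventually_ge_atTop 1] with n hbias' hn
    have hn0 : (0 : ℝ) < (n : ℝ) := by exact_mod_cast hn
    have hnH : 0 < (n : ℝ) * Hn n := mul_pos hn0 (hHpos n)
    have hGmem : MemLp (G n) 2 P := by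
      have h4 : MemLp (∑ i ∈ Finset.range n, Y n i) 2 P :=
        memLp_finset_sum' _ fun i _ => hYmem n i
      have h5 := h4.const_mul (1 / ((n : ℝ) * Hn n))
      have h6 : G n = fun ω => (1 / ((n : ℝ) * Hn n)) * (∑ i ∈ Finset.range n, Y n i) ω := by
        funext ω
        simp [hGdef, Finset.sum_apply]
      rw [h6]
      exact h5
    have hcheb := meas_ge_le_variance_div_sq (μ := P) hGmem (half_pos hδ)
    have hsub : {ω | δ < |G n ω - g 0|} ⊆ {ω | δ / 2 ≤ |G n ω - ∫ ω', G n ω' ∂P|} := by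
      intro ω hω
      simp only [Set.mem_setOf_eq] at hω ⊢
      rw [hGmean n hn]
      linarith [abs_sub_le (G n ω) (I n) (g 0)]
    have h5 : P {ω | δ < |G n ω - g 0|}
        ≤ ENNReal.ofReal (variance (G n) P / (δ / 2)^2) :=
      le_trans (measure_mono hsub) hcheb
    have h6 := ENNReal.toReal_mono ENNReal.ofReal_ne_top h5
    refine h6.trans ?_
    rw [ENNReal.toReal_ofReal (div_nonneg (variance_nonneg _ _) (sq_nonneg _))]
    have h7 : variance (G n) P / (δ / 2)^2
        ≤ ((Cg * CK^2) / ((n : ℝ) * Hn n)) / (δ / 2)^2 := by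
      gcongr
      exact hGvar n hn
    refine h7.trans (le_of_eq ?_)
    ring
  -- bound tends to zero
  have hbnd : Tendsto (fun n : ℕ => (Cg * CK^2 / (δ / 2)^2) * (1 / ((n : ℝ) * Hn n)))
      atTop (𝓝 0) := by
    have h1 : Tendsto (fun n : ℕ => ((n : ℝ) * Hn n)⁻¹) atTop (𝓝 0) :=
      hnh.inv_tendsto_atTop
    have h2 := h1.const_mul (Cg * CK^2 / (δ / 2)^2)
    simpa [one_div, mul_zero] using h2
  exact squeeze_zero' (Filter.Eventually.of_forall fun n => ENNReal.toReal_nonneg) hmain hbnd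
end
end
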